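/- arXiv:2009.05937 — 11 statements merged into one kernel-verified Lean document; each statement's English description precedes it below -/
import Mathlib

section
/- Let q = 2^m and assume A, B, C ∈ F_q. If the equation Az² + Bz + C = 0 has a solution z ∈ U with z ≠ 1, then A = C. -/
/-- If `A, B, C` lie in the subfield `𝔽_q` of `𝔽_{q²}` (`q = 2^m`) and the equation
`Az² + Bz + C = 0` has a solution `z ≠ 1` on the unit circle `U = {z : z^(q+1) = 1}`,
then `A = C`. Membership in `𝔽_q` is expressed via `a ^ (2^m) = a`. -/
theorem quadratic_unit_circle_solution
    (m : ℕ) (hm : 0 < m) (F : Type*) [Field F] [Fintype F]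
    (hcard : Fintype.card F = 2 ^ (2 * m))
    (A B C z : F)
    (hA : A ^ (2 ^ m) = A) (hB : B ^ (2 ^ m) = B) (hC : C ^ (2 ^ m) = C)
    (hz : z ^ (2 ^ m + 1) = 1) (hz1 : z ≠ 1)
    (heq : A * z ^ 2 + B * z + C = 0) :
    A = C := by
  obtain ⟨p, hpchar⟩ := CharP.exists F
  haveI := hpchar
  have hpprime : p.Prime := CharP.char_is_prime F p
  haveI : Fact p.Prime := ⟨hpprime⟩
  obtain ⟨n, _, hcard'⟩ := FiniteField.card F p
  have hp2 : p = 2 := by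
    have hdvd : p ∣ 2 ^ (2 * m) := by
      rw [← hcard, hcard']
      exact dvd_pow_self p n.ne_zero
    exact (Nat.prime_dvd_prime_iff_eq hpprime Nat.prime_two).mp
      (hpprime.dvd_of_dvd_pow hdvd)
  subst hp2
  haveI : CharP F 2 := hpchar
  have h2F : (2 : F) = 0 := by
    have := CharP.cast_eq_zero F 2; exact_mod_cast this
  have hw : z ^ (2 ^ m) * z = 1 := by
    rw [← pow_succ]; exact hz
  have h2 : A * (z ^ (2 ^ m)) ^ 2 + B * z ^ (2 ^ m) + C = 0 := by
    have := congrArg (· ^ (2 ^ m)) heq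
    simp only [add_pow_char_pow, mul_pow, ← pow_mul, zero_pow] at this
    rw [show 2 * 2 ^ m = 2 ^ m * 2 from mul_comm _ _, pow_mul, hA, hB, hC] at this
    simpa [pow_mul, mul_comm] using this
  have h3 : A + B * z + C * z ^ 2 = 0 := by
    linear_combination z ^ 2 * h2 - (A * (1 + z ^ (2 ^ m) * z) + B * z) * hw
  have h4 : (A + C) * (z ^ 2 + 1) = 0 := by
    linear_combination heq + h3 - B * z * h2F
  have hne : z ^ 2 + 1 ≠ 0 := by
    intro h
    apply hz1
    have : (z + 1) ^ 2 = 0 := by linear_combination h + z * h2F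
    have := pow_eq_zero_iff (n := 2) (by norm_num) |>.mp this
    linear_combination this - h2F
  have hAC : A + C = 0 := by
    rcases mul_eq_zero.mp h4 with h | h
    · exact h
    · exact absurd h hne
  linear_combination hAC - C * h2F
end

section
/- Let q = 2^m. Any function f : F_{q²} → F_{q²} given by f(x) = x^{3q} + a₁x^{2q+1} + a₃x³ with a₁, a₃ ∈ F_{q²} is affine equivalent to a function f'(x) = x^{3q} + a₁'x^{2q+1} + a₃'x³ where a₁' ∈ F_q and a₃' ∈ F_{q²}. -/
/-- `f` is almost perfect nonlinear (APN): for every `a ≠ 0` and every `b`, the equation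
`f (x + a) + f x = b` has at most two solutions `x`. -/
def IsAPN {F : Type*} [Field F] (f : F → F) : Prop :=
  ∀ a : F, a ≠ 0 → ∀ b : F, {x : F | f (x + a) + f x = b}.ncard ≤ 2

/-- `L` is an affine permutation: it is bijective and `x ↦ L x - L 0` is additive
(over a field of characteristic 2, additive maps are exactly the `𝔽₂`-linear ones). -/
def IsAffinePerm {F : Type*} [Field F] (L : F → F) : Prop :=
  Function.Bijective L ∧ ∀ x y : F, L (x + y) + L 0 = L x + L y

/-- `f` and `g` are affine equivalent: `g = L₁ ∘ f ∘ L₂` for affine permutations `L₁, L₂`. -/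
def AffEquiv {F : Type*} [Field F] (f g : F → F) : Prop :=
  ∃ L₁ L₂ : F → F, IsAffinePerm L₁ ∧ IsAffinePerm L₂ ∧ ∀ x : F, g x = L₁ (f (L₂ x))

lemma exists_c_aux (m : ℕ) (hm : 0 < m) (F : Type*) [Field F] [Fintype F]
    (hcard : Fintype.card F = 2 ^ (2 * m)) (a : F) :
    ∃ c : F, c ≠ 0 ∧ a ^ (2 ^ m) * c ^ (2 * (2 ^ m - 1)) = a := by
  classical
  set q : ℕ := 2 ^ m with hq
  have hq1 : 1 ≤ q := Nat.one_le_two_pow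
  have h1q : 1 ≤ q ^ 2 := Nat.one_le_pow _ _ (by omega)
  rcases eq_or_ne a 0 with rfl | ha
  · exact ⟨1, one_ne_zero, by rw [zero_pow (by positivity), zero_mul]⟩
  · obtain ⟨g, hg⟩ := IsCyclic.exists_generator (α := Fˣ)
    obtain ⟨j, hj⟩ := hg (Units.mk0 a ha)
    have hj' : g ^ j = Units.mk0 a ha := hj
    obtain ⟨t, ht⟩ : ∃ t : ℤ, t = -j * (2 ^ (m - 1) + 1) := ⟨_, rfl⟩
    refine ⟨((g ^ t : Fˣ) : F), Units.ne_zero _, ?_⟩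
    have hord : orderOf g = q ^ 2 - 1 := by
      rw [orderOf_eq_card_of_forall_mem_zpowers hg, Nat.card_units,
        Nat.card_eq_fintype_card, hcard, hq, ← pow_mul, mul_comm]
    have h2 : ((q ^ 2 - 1 : ℕ) : ℤ) = (q : ℤ) ^ 2 - 1 := by
      rw [Nat.cast_sub h1q]; push_cast; ring
    have hqsub2 : ((2 * (q - 1) : ℕ) : ℤ) = 2 * ((q : ℤ) - 1) := by omega
    have h2m : (2 : ℤ) * 2 ^ (m - 1) = (q : ℤ) := by
      rw [hq, ← pow_succ']
      push_cast
      congr 1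
      omega
    have hunits : (Units.mk0 a ha) ^ q * (g ^ t) ^ (2 * (q - 1)) = Units.mk0 a ha := by
      have h1 : (Units.mk0 a ha) ^ q * (g ^ t) ^ (2 * (q - 1))
          = g ^ (j * q + t * (2 * ((q : ℤ) - 1))) := by
        calc (Units.mk0 a ha) ^ q * (g ^ t) ^ (2 * (q - 1))
            = (g ^ j) ^ ((q : ℕ) : ℤ) * (g ^ t) ^ ((2 * (q - 1) : ℕ) : ℤ) := by
              rw [hj', zpow_natCast, zpow_natCast]
          _ = g ^ (j * q + t * (2 * ((q : ℤ) - 1))) := by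
              rw [← zpow_mul, ← zpow_mul, ← zpow_add]
              congr 2
              rw [hqsub2]
      rw [h1, ← hj']
      have hsub : g ^ (j * q + t * (2 * ((q : ℤ) - 1)) - j) = 1 := by
        rw [← orderOf_dvd_iff_zpow_eq_one, hord, h2]
        refine ⟨-j, ?_⟩
        rw [ht]
        linear_combination (-j * ((q : ℤ) - 1)) * h2m
      calc g ^ (j * q + t * (2 * ((q : ℤ) - 1)))
          = g ^ (j * q + t * (2 * ((q : ℤ) - 1)) - j) * g ^ (j : ℤ) := by
            rw [← zpow_add]; ring_nf
        _ = g ^ (j : ℤ) := by rw [hsub, one_mul]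
    have hval := congrArg (Units.val) hunits
    push_cast at hval
    simpa using hval

/-- Any `f(x) = x^{3q} + a₁x^{2q+1} + a₃x³` on `𝔽_{q²}` (`q = 2^m`) is affine equivalent to
a function of the same shape whose middle coefficient lies in the subfield `𝔽_q`. -/
theorem kim_type_no_a2_coeff_in_subfield
    (m : ℕ) (hm : 0 < m) (F : Type*) [Field F] [Fintype F]
    (hcard : Fintype.card F = 2 ^ (2 * m))
    (a₁ a₃ : F) (f : F → F)
    (hf : ∀ x : F, f x = x ^ (3 * 2 ^ m) + a₁ * x ^ (2 * 2 ^ m + 1) + a₃ * x ^ 3) :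
    ∃ a₁' a₃' : F, a₁' ^ (2 ^ m) = a₁' ∧
      AffEquiv f (fun x : F => x ^ (3 * 2 ^ m) + a₁' * x ^ (2 * 2 ^ m + 1) + a₃' * x ^ 3) := by
  obtain ⟨c, hc0, hc⟩ := exists_c_aux m hm F hcard a₁
  set q : ℕ := 2 ^ m with hq
  have hq1 : 1 ≤ q := Nat.one_le_two_pow
  have hfrob : ∀ x : F, x ^ (q ^ 2) = x := by
    intro x
    have hcardF : Fintype.card F = q ^ 2 := by rw [hcard, hq, ← pow_mul, mul_comm]
    rw [← hcardF]; exact FiniteField.pow_card x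
  have hc3 : c ^ (3 * q) ≠ 0 := pow_ne_zero _ hc0
  set a₁' : F := a₁ * c ^ (2 * q + 1) * (c ^ (3 * q))⁻¹ with ha₁'
  set a₃' : F := a₃ * c ^ 3 * (c ^ (3 * q))⁻¹ with ha₃'
  have key : a₁ ^ q * c ^ (4 * q + 2) = a₁ * c ^ (2 * q + 4) := by
    have e1 : 2 * (q - 1) + (2 * q + 4) = 4 * q + 2 := by omega
    calc a₁ ^ q * c ^ (4 * q + 2)
        = a₁ ^ q * c ^ (2 * (q - 1)) * c ^ (2 * q + 4) := by rw [mul_assoc, ← pow_add, e1]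
      _ = a₁ * c ^ (2 * q + 4) := by rw [hc]
  have r1 : c ^ ((2 * q + 1) * q) * c ^ (3 * q) = c ^ (4 * q + 2) := by
    calc c ^ ((2 * q + 1) * q) * c ^ (3 * q)
        = c ^ (q ^ 2 * 2 + 4 * q) := by rw [← pow_add]; congr 1; ring
      _ = (c ^ (q ^ 2)) ^ 2 * c ^ (4 * q) := by rw [pow_add, pow_mul]
      _ = c ^ (4 * q + 2) := by rw [hfrob, ← pow_add]; congr 1; omega
  have r2 : c ^ (2 * q + 1) * c ^ (3 * q * q) = c ^ (2 * q + 4) := by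
    calc c ^ (2 * q + 1) * c ^ (3 * q * q)
        = c ^ (q ^ 2 * 3 + (2 * q + 1)) := by rw [← pow_add]; congr 1; ring
      _ = (c ^ (q ^ 2)) ^ 3 * c ^ (2 * q + 1) := by rw [pow_add, pow_mul]
      _ = c ^ (2 * q + 4) := by rw [hfrob, ← pow_add]; congr 1; omega
  have main : a₁' ^ q = a₁' := by
    have h1 : a₁' ^ q = a₁ ^ q * c ^ ((2 * q + 1) * q) * (c ^ (3 * q * q))⁻¹ := by
      rw [ha₁', mul_pow, mul_pow, inv_pow, ← pow_mul, ← pow_mul]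
    rw [h1, ha₁', ← div_eq_mul_inv, ← div_eq_mul_inv,
      div_eq_div_iff (pow_ne_zero _ hc0) hc3]
    rw [mul_assoc, r1, mul_assoc, r2]
    exact key
  refine ⟨a₁', a₃', main, (fun y => (c ^ (3 * q))⁻¹ * y), (fun x => c * x), ?_, ?_, ?_⟩
  · exact ⟨⟨fun a b h => mul_left_cancel₀ (inv_ne_zero hc3) h,
      fun y => ⟨c ^ (3 * q) * y, by field_simp⟩⟩, fun x y => by ring⟩
  · exact ⟨⟨fun a b h => mul_left_cancel₀ hc0 h,
      fun y => ⟨c⁻¹ * y, by field_simp⟩⟩, fun x y => by ring⟩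
  · intro x
    simp only [hf, ha₁', ha₃']
    field_simp
    ring
end

section
/- Let q = 2^m and let f : F_{q²} → F_{q²} be given by f(x) = x^{3q} + a₁x^{2q+1} + a₂x^{q+2} + a₃x³ where a₁ ∈ F_q, a₂ ∈ F_{q²}*, a₃ ∈ F_{q²}. If a₁/a₂ ∉ U and a₁/a₂ ≠ a₃^q, then f is affine equivalent to a function h(x) = x^{3q} + a₁'x^{2q+1} + a₃'x³ where a₁' ∈ F_q and a₃' ∈ F_{q²}. -/
lemma key_identity {F : Type*} [Field F] (a₁ a₂ a₃ A B X Y l M : F) (htwo : (2:F) = 0)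
    (hc : a₁ + a₂*A ≠ 0) (hM : M ≠ 0) :
    Y^3 + ((a₁^2 + a₂*B)/(a₁ + a₂*A) * l / M) * ((Y^2)*X)
      + ((a₁*a₃ + a₂)/(a₁ + a₂*A) * l^3 / M^3) * X^3
    = (a₁ * ((M*Y)^3 + a₁*((M*Y)^2*(l*X)) + a₂*((M*Y)*(l*X)^2) + a₃*(l*X)^3)
      + a₂ * ((l*X)^3 + a₁*((l*X)^2*(M*Y)) + B*((l*X)*(M*Y)^2) + A*(M*Y)^3))
      * ((a₁ + a₂*A) * M^3)⁻¹ := by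
  rw [eq_comm, mul_inv_eq_iff_eq_mul₀ (mul_ne_zero hc (pow_ne_zero 3 hM))]
  field_simp
  linear_combination (a₁*M^4*l^2*X^2*a₂*Y*(M*a₂^2*A^2 - a₂*A - a₁ + 2*a₁*M*a₂*A + a₁^2*M + a₂*A + a₁) + (a₁ * M * Y * l ^ 2 * X ^ 2 * a₂ - a₁ * M ^ 5 * Y * l ^ 2 * X ^ 2 * a₂ ^ 3 * A ^ 2 - a₁ ^ 2 * M ^ 5 * Y * l ^ 2 * X ^ 2 * a₂ ^ 2 * A * 2 - a₁ ^ 3 * M ^ 5 * Y * l ^ 2 * X ^ 2 * a₂)) * htwo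

/-- If `a₁/a₂ ∉ U` and `a₁/a₂ ≠ a₃^q`, then the Kim-type function `f` is affine equivalent to
a function `h(x) = x^{3q} + a₁'x^{2q+1} + a₃'x³` with `a₁' ∈ 𝔽_q`. Here `q = 2^m`,
`U = {z : z^(q+1) = 1}`, and membership in `𝔽_q` is expressed via `a ^ (2^m) = a`. -/
theorem kim_type_eliminate_a2
    (m : ℕ) (hm : 0 < m) (F : Type*) [Field F] [Fintype F]
    (hcard : Fintype.card F = 2 ^ (2 * m))
    (a₁ a₂ a₃ : F) (ha₁ : a₁ ^ (2 ^ m) = a₁) (ha₂ : a₂ ≠ 0)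
    (hU : (a₁ / a₂) ^ (2 ^ m + 1) ≠ 1)
    (hne : a₁ / a₂ ≠ a₃ ^ (2 ^ m))
    (f : F → F)
    (hf : ∀ x : F, f x = x ^ (3 * 2 ^ m) + a₁ * x ^ (2 * 2 ^ m + 1)
        + a₂ * x ^ (2 ^ m + 2) + a₃ * x ^ 3) :
    ∃ a₁' a₃' : F, a₁' ^ (2 ^ m) = a₁' ∧
      AffEquiv f (fun x : F => x ^ (3 * 2 ^ m) + a₁' * x ^ (2 * 2 ^ m + 1) + a₃' * x ^ 3) := by
  set q : ℕ := 2 ^ m with hqdef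
  have hq1 : 1 < q := Nat.one_lt_two_pow hm.ne'
  have hq0 : q ≠ 0 := by omega
  have hchar2 : CharP F 2 := by
    obtain ⟨n, hp, hcn⟩ := FiniteField.card F (ringChar F)
    have hdvd : ringChar F ∣ 2 := by
      have h1 : ringChar F ∣ 2 ^ (2 * m) := by
        rw [← hcard, hcn]; exact dvd_pow_self _ (by exact_mod_cast n.2.ne')
      exact hp.dvd_of_dvd_pow h1
    have heq : ringChar F = 2 := ((Nat.prime_dvd_prime_iff_eq hp Nat.prime_two).mp hdvd)
    rw [← heq]; exact ringChar.charP F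
  haveI := hchar2
  haveI : Fact (Nat.Prime 2) := ⟨Nat.prime_two⟩
  have htwo : (2 : F) = 0 := by
    have := CharP.cast_eq_zero F 2; exact_mod_cast this
  have hcardqq : Fintype.card F = q * q := by
    rw [hcard, hqdef, ← pow_add, two_mul]
  have hqq : ∀ z : F, (z ^ q) ^ q = z := by
    intro z; rw [← pow_mul, ← hcardqq]; exact FiniteField.pow_card z
  have hqq' : ∀ z : F, z ^ (q * q) = z := by
    intro z; rw [pow_mul]; exact hqq z
  have frob : ∀ z w : F, (z + w) ^ q = z ^ q + w ^ q := fun z w => add_pow_char_pow z w 2 m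
  have frobs : ∀ z w : F, (z - w) ^ q = z ^ q - w ^ q := fun z w => sub_pow_char_pow z w m
  have hc : a₁ + a₂ * a₃ ^ q ≠ 0 := by
    intro h
    apply hne
    rw [div_eq_iff ha₂]
    linear_combination h - (a₂ * a₃ ^ q) * htwo
  -- the kernel lemma
  have hker : ∀ w : F, a₁ * w + a₂ * w ^ q = 0 → w = 0 := by
    intro w hw
    by_contra hwne
    apply hU
    have hkey : a₁ * w = a₂ * w ^ q := by linear_combination hw - (a₂ * w ^ q) * htwo
    have hdiv : a₁ / a₂ = w ^ q / w := by
      rw [div_eq_div_iff ha₂ hwne]; linear_combination hkey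
    rw [hdiv, div_pow, ← pow_mul]
    have he : w ^ (q * (q + 1)) = w ^ (q + 1) := by
      rw [Nat.mul_add, Nat.mul_one, pow_add, hqq' w, pow_succ]; ring
    rw [he]
    exact div_self (pow_ne_zero _ hwne)
  -- choose l
  set a₁' : F := (a₁ ^ 2 + a₂ * a₂ ^ q) / (a₁ + a₂ * a₃ ^ q) with ha₁'
  have hl_ex : ∃ l : F, l ≠ 0 ∧ a₁' ^ q * l ^ (2 * q) = a₁' * l ^ 2 := by
    by_cases h0 : a₁' = 0
    · exact ⟨1, one_ne_zero, by rw [h0, zero_pow hq0]; ring⟩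
    · have hq2 : 2 ∣ q := dvd_pow_self 2 hm.ne'
      have hcop : Nat.Coprime (2 * (q - 1)) (q + 1) := by
        apply Nat.Coprime.mul
        · exact (Nat.Prime.coprime_iff_not_dvd Nat.prime_two).mpr (by omega)
        · have hd2 : Nat.gcd (q - 1) (q + 1) ∣ 2 := by
            have := Nat.dvd_sub (Nat.gcd_dvd_right (q - 1) (q + 1)) (Nat.gcd_dvd_left (q - 1) (q + 1))
            simpa [show q + 1 - (q - 1) = 2 by omega] using this
          have hdq : Nat.gcd (q - 1) (q + 1) ∣ q + 1 := Nat.gcd_dvd_right _ _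
          rcases (Nat.dvd_prime Nat.prime_two).mp hd2 with h | h
          · exact h
          · exfalso
            rw [h] at hdq
            omega
      obtain ⟨s, -, hs⟩ := Nat.exists_mul_mod_eq_one_of_coprime hcop (by omega)
      have h' := Nat.div_add_mod (2 * (q - 1) * s) (q + 1)
      rw [hs] at h'
      set t := 2 * (q - 1) * s / (q + 1) with ht
      set c : F := a₁' ^ (q * (q - 1)) with hc'
      have hcne : c ≠ 0 := pow_ne_zero _ h0
      have hipow : a₁' ^ (q * q - 1) = 1 := by
        rw [← hcardqq]; exact FiniteField.pow_card_sub_one_eq_one _ h0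
      have hcq1 : c ^ (q + 1) = 1 := by
        rw [hc', ← pow_mul]
        have e1 : q * (q - 1) * (q + 1) = (q * q - 1) * q := by
          zify [hq1.le, Nat.one_le_iff_ne_zero.mpr (Nat.mul_ne_zero hq0 hq0)]
          ring
        rw [e1, pow_mul, hipow, one_pow]
      refine ⟨c ^ s, pow_ne_zero _ hcne, ?_⟩
      have hl2q : (c ^ s) ^ (2 * q) = c * (c ^ s) ^ 2 := by
        have e2 : s * (2 * q) = 2 * (q - 1) * s + 2 * s := by
          have hq' : q - 1 + 1 = q := by omega
          calc s * (2 * q) = s * (2 * ((q-1)+1)) := by rw [hq']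
          _ = 2 * (q - 1) * s + 2 * s := by ring
        calc (c ^ s) ^ (2 * q) = c ^ (s * (2 * q)) := (pow_mul c s (2*q)).symm
        _ = c ^ (2 * (q - 1) * s + 2 * s) := by rw [e2]
        _ = ((c ^ (q+1)) ^ t * c) * (c ^ s) ^ 2 := by
            rw [← h', pow_add, pow_add, pow_one, pow_mul, Nat.mul_comm 2 s, pow_mul]
        _ = c * (c ^ s) ^ 2 := by rw [hcq1, one_pow, one_mul]
      rw [hl2q]
      have hqc : a₁' ^ q * c = a₁' := by
        rw [hc', ← pow_add]
        have e3 : q + q * (q - 1) = q * q := by zify [hq1.le]; ring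
        rw [e3]; exact hqq' a₁'
      calc a₁' ^ q * (c * (c ^ s) ^ 2) = (a₁' ^ q * c) * (c ^ s) ^ 2 := by ring
      _ = a₁' * (c ^ s) ^ 2 := by rw [hqc]
  obtain ⟨l, hl, hl2⟩ := hl_ex
  have hM : l ^ q ≠ 0 := pow_ne_zero _ hl
  refine ⟨a₁' * l / l ^ q, (a₁ * a₃ + a₂) / (a₁ + a₂ * a₃ ^ q) * l ^ 3 / (l ^ q) ^ 3, ?_, ?_⟩
  · rw [div_pow, mul_pow, hqq l, div_eq_div_iff hl hM]
    linear_combination hl2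
  · refine ⟨fun y => (a₁ * y + a₂ * y ^ q) * ((a₁ + a₂ * a₃ ^ q) * (l ^ q) ^ 3)⁻¹,
      fun x => l * x, ?_, ?_, ?_⟩
    · constructor
      · rw [← Finite.injective_iff_bijective]
        intro u v huv
        have h1 : a₁ * u + a₂ * u ^ q = a₁ * v + a₂ * v ^ q :=
          mul_right_cancel₀ (inv_ne_zero (mul_ne_zero hc (pow_ne_zero 3 hM))) huv
        have h2 : a₁ * (u - v) + a₂ * (u - v) ^ q = 0 := by
          rw [frobs]; linear_combination h1
        exact sub_eq_zero.mp (hker _ h2)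
      · intro u v
        dsimp only
        have h0q : (0:F) ^ q = 0 := zero_pow hq0
        rw [frob, h0q]
        ring
    · exact ⟨(Equiv.mulLeft₀ l hl).bijective, fun u v => by dsimp only; ring⟩
    · intro x
      dsimp only
      have hlx : (l * x) ^ q = l ^ q * x ^ q := mul_pow l x q
      have hswap : ∀ (z : F) (n : ℕ), (z ^ n) ^ q = (z ^ q) ^ n := fun z n => by
        rw [← pow_mul, Nat.mul_comm, pow_mul]
      have hMY : (l ^ q * x ^ q) ^ q = l * x := by rw [mul_pow, hqq l, hqq x]
      have eR : f (l * x) = (l^q*(x^q))^3 + a₁*((l^q*(x^q))^2*(l*x))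
          + a₂*((l^q*(x^q))*(l*x)^2) + a₃*(l*x)^3 := by
        rw [hf]
        have h1 : (l*x) ^ (3*q) = ((l*x)^q)^3 := by rw [Nat.mul_comm 3 q, pow_mul]
        have h2 : (l*x) ^ (2*q+1) = ((l*x)^q)^2 * (l*x) := by
          rw [pow_add, pow_one, Nat.mul_comm 2 q, pow_mul]
        have h3 : (l*x) ^ (q+2) = (l*x)^q * (l*x)^2 := pow_add _ _ _
        rw [h1, h2, h3, hlx]
      have eS : (f (l * x)) ^ q
          = (l*x)^3 + a₁*((l*x)^2*(l^q*(x^q))) + a₂^q*((l*x)*(l^q*(x^q))^2)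
            + a₃^q*(l^q*(x^q))^3 := by
        rw [eR, frob, frob, frob]
        rw [mul_pow a₁, mul_pow a₂, mul_pow a₃]
        rw [mul_pow ((l^q*(x^q))^2) (l*x), mul_pow (l^q*(x^q)) ((l*x)^2)]
        rw [hswap (l^q*(x^q)) 3, hswap (l^q*(x^q)) 2, hswap (l*x) 3, hswap (l*x) 2]
        rw [hMY, hlx, ha₁]
      have hL3 : x ^ (3*q) = (x^q)^3 := by rw [Nat.mul_comm 3 q, pow_mul]
      have hL2 : x ^ (2*q+1) = (x^q)^2 * x := by
        rw [pow_add, pow_one, Nat.mul_comm 2 q, pow_mul]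
      rw [eS, eR, hL3, hL2, ha₁']
      exact key_identity a₁ a₂ a₃ (a₃^q) (a₂^q) x (x^q) l (l^q) htwo hc hM
end

section
/- Let m ≥ 4 and q = 2^m. Let f : F_{q²} → F_{q²} be given by f(x) = x^{3q} + a₁x^{2q+1} + a₃x³ where a₁ ∈ F_q and a₃ ∈ F_{q²}. If (a₁, 0, a₃) ∈ Γ₁, then f is affine equivalent to G₁(x) = x³ or f is affine equivalent to G₂(x) = x^{2^{m-1}+1}. -/
open Finset Function Polynomial

section Aux

/-- characteristic 2 from cardinality -/
lemma my_char_two (F : Type*) [Field F] [Fintype F] (n : ℕ) (hcard : Fintype.card F = 2 ^ n) :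
    CharP F 2 := by
  haveI := ringChar.charP F
  obtain ⟨k, hp, hc⟩ := FiniteField.card F (ringChar F)
  have hdvd : ringChar F ∣ 2 ^ n := by
    rw [← hcard, hc]; exact dvd_pow_self _ (by exact_mod_cast k.ne_zero)
  have h2 : ringChar F = 2 :=
    (Nat.prime_dvd_prime_iff_eq hp Nat.prime_two).mp (hp.dvd_of_dvd_pow hdvd)
  exact h2 ▸ ringChar.charP F

/-- telescoping sum for the Artin–Schreier trace -/
lemma my_tel {F : Type*} [Field F] [CharP F 2] (u : F) (k : ℕ) :
    ∑ i ∈ Finset.range k, (u ^ 2 + u) ^ 2 ^ i = u ^ 2 ^ k + u := by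
  haveI : Fact (Nat.Prime 2) := ⟨Nat.prime_two⟩
  have h2 : (2 : F) = 0 := by exact_mod_cast CharP.cast_eq_zero F 2
  induction k with
  | zero => simp only [Finset.range_zero, Finset.sum_empty, pow_zero, pow_one]
            linear_combination (-u) * h2
  | succ k ih =>
      rw [Finset.sum_range_succ, ih, add_pow_char_pow]
      have e : (u ^ 2) ^ 2 ^ k = u ^ 2 ^ (k + 1) := by rw [← pow_mul, ← pow_succ']
      rw [e]; linear_combination (u ^ 2 ^ k) * h2

/-- Artin–Schreier: if the "trace" of `a` vanishes then `u^2+u=a` is solvable. -/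
lemma my_AS {F : Type*} [Field F] [Fintype F] (n : ℕ) (hn : n ≠ 0)
    (hcard : Fintype.card F = 2 ^ n) (a : F)
    (ha : ∑ i ∈ Finset.range n, a ^ 2 ^ i = 0) : ∃ u : F, u ^ 2 + u = a := by
  classical
  haveI : CharP F 2 := my_char_two F n hcard
  haveI : Fact (Nat.Prime 2) := ⟨Nat.prime_two⟩
  have h2 : (2 : F) = 0 := by exact_mod_cast CharP.cast_eq_zero F 2
  set P : F → F := fun u => u ^ 2 + u with hP
  set S : Finset F := Finset.univ.image P with hS
  set K : Finset F := Finset.univ.filter (fun y : F => ∑ i ∈ Finset.range n, y ^ 2 ^ i = 0) with hK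
  have hSK : S ⊆ K := by
    intro y hy
    rw [hS, Finset.mem_image] at hy
    obtain ⟨u, -, rfl⟩ := hy
    rw [hK, Finset.mem_filter]
    refine ⟨Finset.mem_univ _, ?_⟩
    rw [hP]
    have htel := my_tel u n
    rw [htel]
    have hu : u ^ 2 ^ n = u := by
      have := FiniteField.pow_card u
      rwa [hcard] at this
    rw [hu]
    linear_combination u * h2
  have hKcard : K.card ≤ 2 ^ (n - 1) := by
    set p : Polynomial F := ∑ i ∈ Finset.range n, (Polynomial.X : Polynomial F) ^ 2 ^ i with hp
    have hpne : p ≠ 0 := by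
      intro h0
      have hc : p.coeff (2 ^ (n - 1)) = 1 := by
        rw [hp, Polynomial.finset_sum_coeff]
        rw [Finset.sum_eq_single (n - 1)]
        · rw [Polynomial.coeff_X_pow, if_pos rfl]
        · intro i hi hine
          rw [Polynomial.coeff_X_pow, if_neg]
          intro he
          exact hine (Nat.pow_right_injective (le_refl 2) he.symm)
        · intro h
          exact absurd (Finset.mem_range.mpr (Nat.sub_lt (Nat.pos_of_ne_zero hn) one_pos)) h
      rw [h0, Polynomial.coeff_zero] at hc
      exact one_ne_zero hc.symm
    have hdeg : p.natDegree ≤ 2 ^ (n - 1) := by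
      rw [hp]
      apply Polynomial.natDegree_sum_le_of_forall_le
      intro i hi
      rw [Polynomial.natDegree_X_pow]
      exact Nat.pow_le_pow_right (by norm_num) (Nat.le_sub_one_of_lt (Finset.mem_range.mp hi))
    have hsub : K ⊆ p.roots.toFinset := by
      intro y hy
      rw [hK, Finset.mem_filter] at hy
      rw [Multiset.mem_toFinset, Polynomial.mem_roots']
      refine ⟨hpne, ?_⟩
      rw [Polynomial.IsRoot, hp, Polynomial.eval_finset_sum]
      simpa using hy.2
    calc K.card ≤ p.roots.toFinset.card := Finset.card_le_card hsub
      _ ≤ Multiset.card p.roots := Multiset.toFinset_card_le _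
      _ ≤ p.natDegree := Polynomial.card_roots' p
      _ ≤ 2 ^ (n - 1) := hdeg
  have hScard : 2 ^ (n - 1) ≤ S.card := by
    have hfib : ∀ b ∈ Finset.univ.image P, (Finset.univ.filter fun u => P u = b).card ≤ 2 := by
      intro b hb
      rw [Finset.mem_image] at hb
      obtain ⟨u₀, -, hu₀⟩ := hb
      have hsub : (Finset.univ.filter fun u => P u = b) ⊆ {u₀, u₀ + 1} := by
        intro v hv
        rw [Finset.mem_filter] at hv
        have hv2 : P v = P u₀ := by rw [hv.2, hu₀]
        rw [hP] at hv2
        have hz : (v + u₀) * (v + u₀ + 1) = 0 := by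
          linear_combination hv2 + (v * u₀ + u₀ ^ 2 + u₀) * h2
        rcases mul_eq_zero.mp hz with h | h
        · have : v = u₀ := by linear_combination h - u₀ * h2
          simp [this]
        · have : v = u₀ + 1 := by linear_combination h - (u₀ + 1) * h2
          simp [this]
      calc (Finset.univ.filter fun u => P u = b).card ≤ ({u₀, u₀ + 1} : Finset F).card :=
            Finset.card_le_card hsub
        _ ≤ 2 := by
            apply le_trans (Finset.card_insert_le _ _)
            simp
    have hle := Finset.card_le_mul_card_image (Finset.univ : Finset F) 2 hfib
    rw [Finset.card_univ, hcard] at hle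
    rw [← hS] at hle
    have h2n : 2 ^ n = 2 * 2 ^ (n - 1) := by
      rw [← pow_succ']
      congr 1
      omega
    omega
  have hEq : S = K := Finset.eq_of_subset_of_card_le hSK (le_trans hKcard hScard)
  have haK : a ∈ K := by
    rw [hK, Finset.mem_filter]; exact ⟨Finset.mem_univ _, ha⟩
  rw [← hEq, hS, Finset.mem_image] at haK
  obtain ⟨u, -, hu⟩ := haK
  exact ⟨u, hu⟩

/-- idempotence of the trace-sum of a subfield element -/
lemma my_shift {F : Type*} [Field F] [CharP F 2] (m : ℕ) (z : F) (hz : z ^ 2 ^ m = z) :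
    (∑ i ∈ Finset.range m, z ^ 2 ^ i) ^ 2 = ∑ i ∈ Finset.range m, z ^ 2 ^ i := by
  rw [CharTwo.sum_sq]
  have e : ∀ i, (z ^ 2 ^ i) ^ 2 = z ^ 2 ^ (i + 1) := fun i => by rw [← pow_mul, ← pow_succ]
  rw [Finset.sum_congr rfl (fun i _ => e i)]
  have h1 := Finset.sum_range_succ' (fun i => z ^ 2 ^ i) m
  have h2' := Finset.sum_range_succ (fun i => z ^ 2 ^ i) m
  simp only [pow_zero, pow_one, hz] at h1 h2'
  linear_combination h2' - h1

lemma my_L0 {F : Type*} [Field F] (L : F → F) (hadd : ∀ x y, L (x + y) = L x + L y) :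
    L 0 = 0 := by
  have := hadd 0 0
  rw [add_zero] at this
  exact (left_eq_add.mp this)

/-- linear injections give affine equivalences -/
lemma my_affEquiv {F : Type*} [Field F] [Fintype F] (f g L M : F → F)
    (hL : ∀ x y, L (x + y) = L x + L y) (hLi : Function.Injective L)
    (hM : ∀ x y, M (x + y) = M x + M y) (hMi : Function.Injective M)
    (h : ∀ x, f (M x) = L (g x)) : AffEquiv f g := by
  have hLb : Function.Bijective L := Finite.injective_iff_bijective.mp hLi
  have hMb : Function.Bijective M := Finite.injective_iff_bijective.mp hMi
  have hL0 : L 0 = 0 := my_L0 L hL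
  have hM0 : M 0 = 0 := my_L0 M hM
  have li : Function.LeftInverse (Function.invFun L) L := Function.leftInverse_invFun hLb.1
  have ri : Function.RightInverse (Function.invFun L) L := Function.rightInverse_invFun hLb.2
  refine ⟨Function.invFun L, M, ⟨⟨ri.injective, li.surjective⟩, ?_⟩, ⟨hMb, ?_⟩, ?_⟩
  · intro x y
    apply hLi
    rw [hL, hL, ri (x + y), ri 0, ri x, ri y, add_zero]
  · intro x y
    rw [hM, hM0, add_zero]
  · intro x
    rw [h x, li]

/-- additive maps with trivial kernel are injective (char 2) -/
lemma my_inj {F : Type*} [Field F] (h2 : (2 : F) = 0) (L : F → F)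
    (hadd : ∀ x y, L (x + y) = L x + L y) (hker : ∀ t, L t = 0 → t = 0) :
    Function.Injective L := by
  intro s t h
  have h0 : L (s + t) = 0 := by
    rw [hadd, h]; linear_combination (L t) * h2
  have := hker _ h0
  linear_combination this - t * h2

/-- the key cubic-form diagonalization identity -/
lemma my_main_id {F : Type*} [Field F] (h2 : (2 : F) = 0) (a₁ c x y : F)
    (ha' : a₁ * (1 + c) ^ 2 = c) (hone : (1 : F) + c ≠ 0) :
    (y + c * x) ^ 3 + a₁ * ((y + c * x) ^ 2 * (x + c * y)) + a₁ * (x + c * y) ^ 3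
      = (c ^ 3 + c) * x ^ 3 + (1 + c ^ 2) * y ^ 3 := by
  have key : (1 + c) ^ 2 * ((y + c * x) ^ 3 + a₁ * ((y + c * x) ^ 2 * (x + c * y))
        + a₁ * (x + c * y) ^ 3)
      = (1 + c) ^ 2 * ((c ^ 3 + c) * x ^ 3 + (1 + c ^ 2) * y ^ 3) := by
    linear_combination ((y + c * x) ^ 2 * (x + c * y) + (x + c * y) ^ 3) * ha' +
      (2 * c * x * y ^ 2 + 3 * c ^ 2 * x * y ^ 2 + 4 * c ^ 2 * x ^ 2 * y - c ^ 2 * x ^ 3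
        - c ^ 3 * y ^ 3 + 4 * c ^ 3 * x * y ^ 2 + 3 * c ^ 3 * x ^ 2 * y
        + 2 * c ^ 4 * x ^ 2 * y) * h2
  exact mul_left_cancel₀ (pow_ne_zero 2 hone) key

/-- the key identity for the contradiction branch -/
lemma my_contra_id {F : Type*} [Field F] (h2 : (2 : F) = 0) (a₁ a₃ s t1 α x0 w : F)
    (hs : s ≠ 0) (hα : α * s = t1 + 1) (hx0 : x0 * s = α) (hw : w * s = a₃)
    (hE2 : (t1 + 1) ^ 2 = a₁ * s + (t1 + 1)) (hE : t1 + 1 = a₁ ^ 2 + a₃ * s + a₃ ^ 2) :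
    w ^ 2 + w = x0 + α ^ 4 + x0 ^ 2 := by
  have key : s ^ 4 * (w ^ 2 + w) = s ^ 4 * (x0 + α ^ 4 + x0 ^ 2) := by
    linear_combination (s ^ 3 + s ^ 3 * w + a₃ * s ^ 2) * hw +
      (-(s ^ 2 * α) - s ^ 3 - s ^ 3 * x0) * hx0 +
      (-(t1 + 1) - (t1 + 1) ^ 3 - s * α - s * (t1 + 1) ^ 2 * α - s ^ 2
        - s ^ 2 * (t1 + 1) * α ^ 2 - s ^ 3 * α ^ 3) * hα +
      (-2 - (t1 + 1) - (t1 + 1) ^ 2 - a₁ * s) * hE2 +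
      (-2 - s ^ 2 - 2 * (a₁ * s)) * hE +
      (-(a₃ * s) - a₃ ^ 2 - a₁ * s - a₁ * a₃ * s ^ 2 - a₁ * a₃ ^ 2 * s - a₁ ^ 2
        - a₁ ^ 2 * s ^ 2 - a₁ ^ 3 * s) * h2
  exact mul_left_cancel₀ (pow_ne_zero 4 hs) key

end Aux

/-- If `(a₁, 0, a₃) ∈ Γ₁`, then `f(x) = x^{3q} + a₁x^{2q+1} + a₃x³` is affine equivalent to
`G₁(x) = x³` or to `G₂(x) = x^{2^{m-1}+1}`. Here `q = 2^m`, `m ≥ 4`, `z̄ = z^q`,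
`Tr_m` is realized as `x ↦ ∑ i < m, x^(2^i)`, and `a₁ ∈ 𝔽_q` is expressed as `a₁^(2^m) = a₁`. -/
theorem kim_type_Gamma1_equiv_Gold
    (m : ℕ) (hm : 4 ≤ m) (F : Type*) [Field F] [Fintype F]
    (hcard : Fintype.card F = 2 ^ (2 * m))
    (a₁ a₂ a₃ : F) (ha₁ : a₁ ^ (2 ^ m) = a₁) (ha₂ : a₂ = 0)
    (f : F → F)
    (hf : ∀ x : F, f x = x ^ (3 * 2 ^ m) + a₁ * x ^ (2 * 2 ^ m + 1) + a₃ * x ^ 3)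
    (θ₁ θ₂ θ₃ θ₄ : F)
    (hθ₁ : θ₁ = 1 + a₁ ^ 2 + a₂ * a₂ ^ (2 ^ m) + a₃ * a₃ ^ (2 ^ m))
    (hθ₂ : θ₂ = a₁ + a₂ ^ (2 ^ m) * a₃)
    (hθ₃ : θ₃ = a₂ ^ (2 ^ m) + a₁ * a₃ ^ (2 ^ m))
    (hθ₄ : θ₄ = a₁ ^ 2 + a₂ * a₂ ^ (2 ^ m))
    (hΓ₁ : θ₁ ≠ 0 ∧ (∑ i ∈ Finset.range m, (θ₂ * θ₂ ^ (2 ^ m) / θ₁ ^ 2) ^ 2 ^ i) = 0 ∧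
        θ₁ ^ 2 * θ₄ + θ₁ * θ₂ * θ₂ ^ (2 ^ m) + θ₂ ^ 2 * θ₃
          + (θ₂ ^ (2 ^ m)) ^ 2 * θ₃ ^ (2 ^ m) = 0) :
    AffEquiv f (fun x : F => x ^ 3) ∨ AffEquiv f (fun x : F => x ^ (2 ^ (m - 1) + 1)) := by
  subst hθ₁ hθ₂ hθ₃ hθ₄ ha₂
  obtain ⟨h1, htr, h3⟩ := hΓ₁
  haveI : CharP F 2 := my_char_two F (2 * m) hcard
  haveI : Fact (Nat.Prime 2) := ⟨Nat.prime_two⟩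
  have h2 : (2 : F) = 0 := by exact_mod_cast CharP.cast_eq_zero F 2
  have hm0 : (0 : F) ^ 2 ^ m = 0 := zero_pow (by positivity)
  simp only [hm0, mul_zero, zero_mul, add_zero, zero_add] at h1 htr h3
  have hq : ∀ z : F, (z ^ 2 ^ m) ^ 2 ^ m = z := by
    intro z
    rw [← pow_mul]
    have e : 2 ^ m * 2 ^ m = 2 ^ (2 * m) := by rw [← pow_add, two_mul]
    rw [e, ← hcard, FiniteField.pow_card]
  by_cases ha : a₁ = 0
  · -- f = L ∘ cube with L t = t^q + a₃ t
    left
    have h1' : 1 + a₃ * a₃ ^ 2 ^ m ≠ 0 := by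
      intro hh
      apply h1
      rw [ha]
      linear_combination hh
    set L : F → F := fun t => t ^ 2 ^ m + a₃ * t with hLdef
    have hLadd : ∀ x y : F, L (x + y) = L x + L y := by
      intro x y
      simp only [hLdef]
      rw [add_pow_char_pow]
      ring
    have hLker : ∀ t : F, L t = 0 → t = 0 := by
      intro t ht
      simp only [hLdef] at ht
      have e : t ^ 2 ^ m = a₃ * t := by linear_combination ht - (a₃ * t) * h2
      have e2 : t = a₃ ^ 2 ^ m * (a₃ * t) := by
        conv_lhs => rw [← hq t]
        rw [e, mul_pow, e]
      have e3 : (1 + a₃ * a₃ ^ 2 ^ m) * t = 0 := by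
        linear_combination e2 + (a₃ * a₃ ^ 2 ^ m * t) * h2
      rcases mul_eq_zero.mp e3 with h | h
      · exact absurd h h1'
      · exact h
    have hLi : Function.Injective L := my_inj h2 L hLadd hLker
    have hmain : ∀ x : F, f (id x) = L (x ^ 3) := by
      intro x
      simp only [id_eq, hLdef]
      rw [hf, ha]
      have e : (x ^ 3) ^ 2 ^ m = x ^ (3 * 2 ^ m) := (pow_mul x 3 (2 ^ m)).symm
      rw [e]
      ring
    exact my_affEquiv f _ L id hLadd hLi (fun x y => rfl) Function.injective_id hmain
  · -- a₁ ≠ 0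
    have hq3 : (a₁ * a₃ ^ 2 ^ m) ^ 2 ^ m = a₁ * a₃ := by
      rw [mul_pow, ha₁, hq]
    rw [ha₁, hq3] at h3
    have hK0 : a₁ ^ 2 * ((1 + a₁ ^ 2 + a₃ * a₃ ^ 2 ^ m) ^ 2 + (1 + a₁ ^ 2 + a₃ * a₃ ^ 2 ^ m)
        + a₁ * (a₃ ^ 2 ^ m + a₃)) = 0 := by linear_combination h3
    have hK : (1 + a₁ ^ 2 + a₃ * a₃ ^ 2 ^ m) ^ 2 + (1 + a₁ ^ 2 + a₃ * a₃ ^ 2 ^ m)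
        + a₁ * (a₃ ^ 2 ^ m + a₃) = 0 :=
      (mul_eq_zero.mp hK0).resolve_left (pow_ne_zero 2 ha)
    rw [ha₁] at htr
    by_cases hs : a₃ ^ 2 ^ m + a₃ = 0
    · -- main branch : a₃ = a₁, equivalence with x^3
      left
      have ha₃q : a₃ ^ 2 ^ m = a₃ := by linear_combination hs - a₃ * h2
      have hfac : (1 + a₁ ^ 2 + a₃ * a₃ ^ 2 ^ m) * ((1 + a₁ ^ 2 + a₃ * a₃ ^ 2 ^ m) + 1) = 0 := by
        linear_combination hK - a₁ * hs
      have hone : 1 + a₁ ^ 2 + a₃ * a₃ ^ 2 ^ m = 1 := by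
        rcases mul_eq_zero.mp hfac with h | h
        · exact absurd h h1
        · linear_combination h - h2
      have ha₃a₁ : a₃ = a₁ := by
        have hz : (a₁ + a₃) ^ 2 = 0 := by
          rw [ha₃q] at hone
          linear_combination hone + (a₁ * a₃) * h2
        have := pow_eq_zero_iff (n := 2) (by norm_num) |>.mp hz
        linear_combination this - a₁ * h2
      have htr' : ∑ i ∈ Finset.range m, (a₁ ^ 2) ^ 2 ^ i = 0 := by
        rw [← htr]
        apply Finset.sum_congr rfl
        intro i _
        rw [hone, one_pow, div_one, ← pow_two]
      have hTtot : ∑ i ∈ Finset.range (2 * m), (a₁ ^ 2) ^ 2 ^ i = 0 := by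
        have hsplit : ∑ i ∈ Finset.range (2 * m), (a₁ ^ 2) ^ 2 ^ i
            = ∑ i ∈ Finset.range m, (a₁ ^ 2) ^ 2 ^ i
              + ∑ i ∈ Finset.range m, (a₁ ^ 2) ^ 2 ^ (m + i) := by
          rw [two_mul]
          exact Finset.sum_range_add (fun i => (a₁ ^ 2) ^ 2 ^ i) m m
        have hsecond : ∀ i : ℕ, (a₁ ^ 2) ^ 2 ^ (m + i) = (a₁ ^ 2) ^ 2 ^ i := by
          intro i
          calc (a₁ ^ 2) ^ 2 ^ (m + i) = ((a₁ ^ 2) ^ 2 ^ m) ^ 2 ^ i := by rw [pow_add, pow_mul]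
            _ = ((a₁ ^ 2 ^ m) ^ 2) ^ 2 ^ i := by rw [pow_right_comm a₁ 2 (2 ^ m)]
            _ = (a₁ ^ 2) ^ 2 ^ i := by rw [ha₁]
        rw [hsplit, Finset.sum_congr rfl (fun i _ => hsecond i), htr', add_zero]
      obtain ⟨u, hu⟩ := my_AS (2 * m) (by omega) hcard (a₁ ^ 2) hTtot
      have huq : u ^ 2 ^ m = u := by
        have e := my_tel u m
        rw [Finset.sum_congr rfl (fun i _ => by rw [hu] : ∀ i ∈ Finset.range m,
          (u ^ 2 + u) ^ 2 ^ i = (a₁ ^ 2) ^ 2 ^ i), htr'] at e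
        linear_combination -e - u * h2
      obtain ⟨c, hcdef⟩ : ∃ c : F, c = u / a₁ := ⟨_, rfl⟩
      have hu' : u ^ 2 + a₁ ^ 2 = u := by linear_combination hu + (a₁ ^ 2 - u) * h2
      have hac : a₁ * c = u := by
        rw [hcdef]; field_simp
      have hc : a₁ * c ^ 2 + a₁ = c := by
        apply mul_left_cancel₀ ha
        calc a₁ * (a₁ * c ^ 2 + a₁) = (a₁ * c) ^ 2 + a₁ ^ 2 := by ring
          _ = u ^ 2 + a₁ ^ 2 := by rw [hac]
          _ = u := hu'
          _ = a₁ * c := hac.symm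
      have hcq : c ^ 2 ^ m = c := by
        rw [hcdef, div_pow, huq, ha₁]
      have hc1 : (1 : F) + c ≠ 0 := by
        intro hh
        have hc1' : c = 1 := by linear_combination -hh + c * h2
        rw [hc1'] at hc
        have : (1 : F) = 0 := by linear_combination -hc + a₁ * h2
        exact one_ne_zero this
      have ha' : a₁ * (1 + c) ^ 2 = c := by linear_combination hc + a₁ * c * h2
      set L : F → F := fun t => (c ^ 3 + c) * t + (1 + c ^ 2) * t ^ 2 ^ m with hLdef
      set M : F → F := fun x => x + c * x ^ 2 ^ m with hMdef
      have hLadd : ∀ x y : F, L (x + y) = L x + L y := by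
        intro x y
        simp only [hLdef]
        rw [add_pow_char_pow]
        ring
      have hMadd : ∀ x y : F, M (x + y) = M x + M y := by
        intro x y
        simp only [hMdef]
        rw [add_pow_char_pow]
        ring
      have hMker : ∀ t : F, M t = 0 → t = 0 := by
        intro t ht
        simp only [hMdef] at ht
        have e : t = c * t ^ 2 ^ m := by linear_combination ht - (c * t ^ 2 ^ m) * h2
        have e2 : t ^ 2 ^ m = c * t := by
          conv_lhs => rw [e]
          rw [mul_pow, hcq, hq]
        have e3 : t = c ^ 2 * t := by
          linear_combination e + c * e2
        have e4 : (1 + c) ^ 2 * t = 0 := by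
          linear_combination e3 + (c * t + c ^ 2 * t) * h2
        rcases mul_eq_zero.mp e4 with h | h
        · exact absurd h (pow_ne_zero 2 hc1)
        · exact h
      have hAq : (c ^ 3 + c) ^ 2 ^ m = c ^ 3 + c := by
        rw [add_pow_char_pow, pow_right_comm, hcq]
      have hDq : (1 + c ^ 2) ^ 2 ^ m = 1 + c ^ 2 := by
        rw [add_pow_char_pow, one_pow, pow_right_comm, hcq]
      have hLker : ∀ t : F, L t = 0 → t = 0 := by
        intro t ht
        simp only [hLdef] at ht
        have e2 : (c ^ 3 + c) * t ^ 2 ^ m + (1 + c ^ 2) * t = 0 := by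
          have := congrArg (fun z : F => z ^ 2 ^ m) ht
          simp only [hm0] at this
          rw [add_pow_char_pow, mul_pow, mul_pow, hAq, hDq, hq] at this
          exact this
        have e3 : ((c ^ 3 + c) + (1 + c ^ 2)) ^ 2 * t = 0 := by
          linear_combination (c ^ 3 + c) * ht + (1 + c ^ 2) * e2
            + ((c ^ 3 + c) * (1 + c ^ 2) * t - (c ^ 3 + c) * (1 + c ^ 2) * t ^ 2 ^ m) * h2
        have e5 : ((c ^ 3 + c) + (1 + c ^ 2)) = (1 + c) ^ 3 := by
          linear_combination -(c + c ^ 2) * h2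
        rw [e5] at e3
        rcases mul_eq_zero.mp e3 with h | h
        · exact absurd h (pow_ne_zero 2 (pow_ne_zero 3 hc1))
        · exact h
      have hLi := my_inj h2 L hLadd hLker
      have hMi := my_inj h2 M hMadd hMker
      have hmain : ∀ x : F, f (M x) = L (x ^ 3) := by
        intro x
        simp only [hMdef, hLdef]
        rw [hf, ha₃a₁]
        have hMq : (x + c * x ^ 2 ^ m) ^ 2 ^ m = x ^ 2 ^ m + c * x := by
          rw [add_pow_char_pow, mul_pow, hcq, hq]
        have e1 : (x + c * x ^ 2 ^ m) ^ (3 * 2 ^ m) = (x ^ 2 ^ m + c * x) ^ 3 := by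
          rw [mul_comm 3, pow_mul, hMq]
        have e2 : (x + c * x ^ 2 ^ m) ^ (2 * 2 ^ m + 1)
            = (x ^ 2 ^ m + c * x) ^ 2 * (x + c * x ^ 2 ^ m) := by
          rw [pow_add, pow_one, mul_comm 2, pow_mul, hMq]
        have e3 : (x ^ 3) ^ 2 ^ m = (x ^ 2 ^ m) ^ 3 := pow_right_comm x 3 (2 ^ m)
        rw [e1, e2, e3]
        have := my_main_id h2 a₁ c x (x ^ 2 ^ m) ha' hc1
        linear_combination this
      exact my_affEquiv f _ L M hLadd hLi hMadd hMi hmain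
    · -- contradiction branch
      exfalso
      have hsq : (a₃ ^ 2 ^ m + a₃) ^ 2 ^ m = a₃ ^ 2 ^ m + a₃ := by
        rw [add_pow_char_pow, hq]; ring
      have ht1q : (1 + a₁ ^ 2 + a₃ * a₃ ^ 2 ^ m) ^ 2 ^ m = 1 + a₁ ^ 2 + a₃ * a₃ ^ 2 ^ m := by
        rw [add_pow_char_pow, add_pow_char_pow, one_pow, mul_pow, hq, pow_right_comm, ha₁]
        ring
      obtain ⟨α, hα⟩ : ∃ α : F, α * (a₃ ^ 2 ^ m + a₃) = (1 + a₁ ^ 2 + a₃ * a₃ ^ 2 ^ m) + 1 :=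
        ⟨_ / _, div_mul_cancel₀ _ hs⟩
      obtain ⟨x0, hx0⟩ : ∃ x0 : F, x0 * (a₃ ^ 2 ^ m + a₃) = α := ⟨_ / _, div_mul_cancel₀ _ hs⟩
      obtain ⟨w, hw⟩ : ∃ w : F, w * (a₃ ^ 2 ^ m + a₃) = a₃ := ⟨_ / _, div_mul_cancel₀ _ hs⟩
      have hE2 : ((1 + a₁ ^ 2 + a₃ * a₃ ^ 2 ^ m) + 1) ^ 2
          = a₁ * (a₃ ^ 2 ^ m + a₃) + ((1 + a₁ ^ 2 + a₃ * a₃ ^ 2 ^ m) + 1) := by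
        linear_combination hK - a₁ * (a₃ ^ 2 ^ m + a₃) * h2
      have hE : (1 + a₁ ^ 2 + a₃ * a₃ ^ 2 ^ m) + 1
          = a₁ ^ 2 + a₃ * (a₃ ^ 2 ^ m + a₃) + a₃ ^ 2 := by
        linear_combination (1 - a₃ ^ 2) * h2
      have hw2 := my_contra_id h2 a₁ a₃ (a₃ ^ 2 ^ m + a₃) (1 + a₁ ^ 2 + a₃ * a₃ ^ 2 ^ m)
        α x0 w hs hα hx0 hw hE2 hE
      -- stability under Frobenius
      have hαq : α ^ 2 ^ m = α := by
        have e : (α * (a₃ ^ 2 ^ m + a₃)) ^ 2 ^ m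
            = ((1 + a₁ ^ 2 + a₃ * a₃ ^ 2 ^ m) + 1) ^ 2 ^ m := by rw [hα]
        rw [mul_pow, hsq, add_pow_char_pow, ht1q, one_pow, ← hα] at e
        exact mul_right_cancel₀ hs e
      have hx0q : x0 ^ 2 ^ m = x0 := by
        have e : (x0 * (a₃ ^ 2 ^ m + a₃)) ^ 2 ^ m = α ^ 2 ^ m := by rw [hx0]
        rw [mul_pow, hsq, hαq, ← hx0] at e
        exact mul_right_cancel₀ hs e
      -- a₁ = α * t1
      have ha1 : a₁ = α * (1 + a₁ ^ 2 + a₃ * a₃ ^ 2 ^ m) := by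
        have h' : a₁ * (a₃ ^ 2 ^ m + a₃)
            = α * (1 + a₁ ^ 2 + a₃ * a₃ ^ 2 ^ m) * (a₃ ^ 2 ^ m + a₃) := by
          linear_combination (-1 : F) * hE2 + (-(1 + a₁ ^ 2 + a₃ * a₃ ^ 2 ^ m)) * hα
        exact mul_right_cancel₀ hs h'
      -- trace of α vanishes
      have htrα : ∑ i ∈ Finset.range m, α ^ 2 ^ i = 0 := by
        have hint : a₁ * a₁ / (1 + a₁ ^ 2 + a₃ * a₃ ^ 2 ^ m) ^ 2 = α ^ 2 := by
          rw [div_eq_iff (pow_ne_zero 2 h1)]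
          linear_combination (a₁ + α * (1 + a₁ ^ 2 + a₃ * a₃ ^ 2 ^ m)) * ha1
        rw [Finset.sum_congr rfl (fun i _ => by rw [hint] : ∀ i ∈ Finset.range m,
          (a₁ * a₁ / (1 + a₁ ^ 2 + a₃ * a₃ ^ 2 ^ m) ^ 2) ^ 2 ^ i = (α ^ 2) ^ 2 ^ i)] at htr
        have e : ∀ i : ℕ, (α ^ 2) ^ 2 ^ i = (α ^ 2 ^ i) ^ 2 := fun i => pow_right_comm α 2 (2 ^ i)
        rw [Finset.sum_congr rfl (fun i _ => e i), ← CharTwo.sum_sq] at htr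
        exact pow_eq_zero_iff (n := 2) (by norm_num) |>.mp htr
      -- trace of α^4 vanishes
      have htrα4 : ∑ i ∈ Finset.range m, (α ^ 4) ^ 2 ^ i = 0 := by
        have e : ∀ i : ℕ, (α ^ 4) ^ 2 ^ i = ((α ^ 2 ^ i) ^ 2) ^ 2 := by
          intro i
          rw [← pow_mul, ← pow_mul, ← pow_mul]
          congr 1
          ring
        rw [Finset.sum_congr rfl (fun i _ => e i), ← CharTwo.sum_sq, ← CharTwo.sum_sq, htrα]
        rw [zero_pow (by norm_num), zero_pow (by norm_num)]
      -- trace of x0 is idempotent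
      have ht2 := my_shift m x0 hx0q
      -- trace of w^2 + w vanishes
      have hwsum : ∑ i ∈ Finset.range m, (w ^ 2 + w) ^ 2 ^ i = 0 := by
        rw [Finset.sum_congr rfl (fun i _ => by rw [hw2] : ∀ i ∈ Finset.range m,
          (w ^ 2 + w) ^ 2 ^ i = (x0 + α ^ 4 + x0 ^ 2) ^ 2 ^ i)]
        have e : ∀ i : ℕ, (x0 + α ^ 4 + x0 ^ 2) ^ 2 ^ i
            = x0 ^ 2 ^ i + (α ^ 4) ^ 2 ^ i + (x0 ^ 2 ^ i) ^ 2 := by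
          intro i
          rw [add_pow_char_pow, add_pow_char_pow, pow_right_comm x0 2 (2 ^ i)]
        rw [Finset.sum_congr rfl (fun i _ => e i), Finset.sum_add_distrib,
          Finset.sum_add_distrib, htrα4, ← CharTwo.sum_sq, ht2, add_zero]
        linear_combination (∑ i ∈ Finset.range m, x0 ^ 2 ^ i) * h2
      have hwq : w ^ 2 ^ m = w := by
        have e := my_tel w m
        rw [hwsum] at e
        linear_combination -e - w * h2
      have ha₃f : a₃ ^ 2 ^ m = a₃ := by
        have e : (w * (a₃ ^ 2 ^ m + a₃)) ^ 2 ^ m = a₃ ^ 2 ^ m := by rw [hw]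
        rw [mul_pow, hsq, hwq, hw] at e
        exact e.symm
      apply hs
      rw [ha₃f]
      linear_combination a₃ * h2
end

section
/- Let m ≥ 4 be even and q = 2^m. Let f : F_{q²} → F_{q²} be given by f(x) = x^{3q} + a₁x^{2q+1} + a₂x^{q+2} + a₃x³ where a₁ = (u³+z)²/(u(u²+z)²), a₂ = (u³+z)²/(u²+z)², a₃ = uz²(u+1)²/(u²+z)² for some u, z ∈ U with u² ≠ z. If f is APN, then f is affine equivalent to G₁(x) = x³ or f is affine equivalent to G₂(x) = x^{2^{m-1}+1}. -/
/-- Let `m ≥ 4` be even, `q = 2^m`, and `u, z ∈ U` with `u² ≠ z`. If the Kim-type function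
with coefficients `a₁ = (u³+z)²/(u(u²+z)²)`, `a₂ = (u³+z)²/(u²+z)²`, `a₃ = uz²(u+1)²/(u²+z)²`
is APN, then it is affine equivalent to `G₁(x) = x³` or to `G₂(x) = x^{2^{m-1}+1}`. -/
theorem kim_type_parametric_equiv_Gold
    (m : ℕ) (hm : 4 ≤ m) (hmeven : Even m) (F : Type*) [Field F] [Fintype F]
    (hcard : Fintype.card F = 2 ^ (2 * m))
    (u z : F) (hu : u ^ (2 ^ m + 1) = 1) (hz : z ^ (2 ^ m + 1) = 1) (huz : u ^ 2 ≠ z)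
    (a₁ a₂ a₃ : F)
    (ha₁ : a₁ = (u ^ 3 + z) ^ 2 / (u * (u ^ 2 + z) ^ 2))
    (ha₂ : a₂ = (u ^ 3 + z) ^ 2 / (u ^ 2 + z) ^ 2)
    (ha₃ : a₃ = u * z ^ 2 * (u + 1) ^ 2 / (u ^ 2 + z) ^ 2)
    (f : F → F)
    (hf : ∀ x : F, f x = x ^ (3 * 2 ^ m) + a₁ * x ^ (2 * 2 ^ m + 1)
        + a₂ * x ^ (2 ^ m + 2) + a₃ * x ^ 3)
    (hAPN : IsAPN f) :
    AffEquiv f (fun x : F => x ^ 3) ∨ AffEquiv f (fun x : F => x ^ (2 ^ (m - 1) + 1)) := by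
  classical
  -- characteristic 2
  obtain ⟨p, hpc⟩ := CharP.exists F
  haveI : CharP F p := hpc
  have hpp : p.Prime := CharP.char_is_prime F p
  haveI : Fact p.Prime := ⟨hpp⟩
  obtain ⟨n, -, hcardp⟩ := FiniteField.card F p
  have hp2 : p = 2 := by
    have h1 : p ∣ 2 ^ (2 * m) := by
      rw [← hcard, hcardp]
      exact dvd_pow_self p n.2.ne'
    exact (Nat.prime_dvd_prime_iff_eq hpp Nat.prime_two).mp (hpp.dvd_of_dvd_pow h1)
  subst hp2
  have h2 : (2 : F) = 0 := by
    have := CharP.cast_eq_zero F 2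
    exact_mod_cast this
  -- basic nonvanishing
  have hu0 : u ≠ 0 := by
    intro h; rw [h, zero_pow (Nat.succ_ne_zero _)] at hu; exact zero_ne_one hu
  have hz0 : z ≠ 0 := by
    intro h; rw [h, zero_pow (Nat.succ_ne_zero _)] at hz; exact zero_ne_one hz
  have huz0 : u ^ 2 + z ≠ 0 := by
    intro h; exact huz (by linear_combination h - z * h2)
  -- Frobenius helpers
  have hfq : ∀ x y : F, (x + y) ^ (2 ^ m) = x ^ (2 ^ m) + y ^ (2 ^ m) := fun x y =>
    add_pow_char_pow x y 2 m
  have hfs : ∀ x y : F, (x + y) ^ (2 ^ (m - 1)) = x ^ (2 ^ (m - 1)) + y ^ (2 ^ (m - 1)) :=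
    fun x y => add_pow_char_pow x y 2 (m - 1)
  have hsq : ∀ x y : F, (x + y) ^ 2 = x ^ 2 + y ^ 2 := fun x y => add_pow_char x y 2
  have hpowcard : ∀ x : F, x ^ (2 ^ m * 2 ^ m) = x := by
    intro x
    have hcc : Fintype.card F = 2 ^ m * 2 ^ m := by rw [hcard, two_mul, pow_add]
    rw [← hcc]; exact FiniteField.pow_card x
  have hswap : ∀ x : F, (x^2)^(2^m) = (x^(2^m))^2 := fun x => by
    rw [← pow_mul, mul_comm, pow_mul]
  -- inverses
  set v : F := u⁻¹ with hvdef
  have hv : u * v = 1 := mul_inv_cancel₀ hu0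
  set zi : F := z⁻¹ with hzidef
  have hzi : z * zi = 1 := mul_inv_cancel₀ hz0
  have hv0 : v ≠ 0 := inv_ne_zero hu0
  have hzi0 : zi ≠ 0 := inv_ne_zero hz0
  have huQ : u ^ (2 ^ m) = v := by
    have h1 : u ^ (2 ^ m) * u = 1 := by rw [← pow_succ]; exact hu
    rw [hvdef]; exact eq_inv_of_mul_eq_one_left h1
  have hvQ : v ^ (2 ^ m) = u := by
    rw [hvdef, inv_pow, huQ, hvdef, inv_inv]
  have hzQ : z ^ (2 ^ m) = zi := by
    have h1 : z ^ (2 ^ m) * z = 1 := by rw [← pow_succ]; exact hz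
    rw [hzidef]; exact eq_inv_of_mul_eq_one_left h1
  -- cube root of unity
  have h3card : 3 ∣ Fintype.card Fˣ := by
    rw [Fintype.card_units, hcard]
    have h4 : (2 : ℕ) ^ (2 * m) = 4 ^ m := by rw [pow_mul]; norm_num
    rw [h4]
    simpa using Nat.sub_dvd_pow_sub_pow 4 1 m
  haveI : Fact (Nat.Prime 3) := ⟨Nat.prime_three⟩
  obtain ⟨ζ, hζ⟩ := exists_prime_orderOf_dvd_card 3 h3card
  set ω : F := (ζ : F) with hωdef
  have hω3 : ω ^ 3 = 1 := by
    rw [hωdef, ← Units.val_pow_eq_pow_val, ← hζ, pow_orderOf_eq_one, Units.val_one]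
  have hω1 : ω ≠ 1 := by
    intro h
    have h1 : ζ = 1 := Units.ext (by rw [Units.val_one, ← h])
    rw [h1, orderOf_one] at hζ; norm_num at hζ
  have hωne0 : ω ≠ 0 := Units.ne_zero ζ
  have hω0 : ω ^ 2 + ω + 1 = 0 := by
    have hfac : (ω - 1) * (ω ^ 2 + ω + 1) = 0 := by linear_combination hω3
    rcases mul_eq_zero.mp hfac with h | h
    · exact absurd (by linear_combination h) hω1
    · exact h
  have hω2ne : ω ^ 2 ≠ 1 := by
    intro h
    have h1 : ζ ^ 2 = 1 := Units.ext (by rw [Units.val_pow_eq_pow_val, Units.val_one]; exact h)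
    have h2' := orderOf_dvd_of_pow_eq_one h1
    rw [hζ] at h2'; norm_num at h2'
  have hωQ : ω ^ (2 ^ m) = ω := by
    obtain ⟨t, ht⟩ := hmeven
    have h3d : (3 : ℕ) ∣ 4 ^ t - 1 := by simpa using Nat.sub_dvd_pow_sub_pow 4 1 t
    obtain ⟨s0, hs0⟩ := h3d
    have h4t : (2 : ℕ) ^ m = 4 ^ t := by rw [ht, ← two_mul, pow_mul]; norm_num
    have h1le : 1 ≤ (4 : ℕ) ^ t := Nat.one_le_pow _ _ (by norm_num)
    have hexp : (2 : ℕ) ^ m = 3 * s0 + 1 := by omega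
    rw [hexp, pow_add, pow_mul, hω3, one_pow, one_mul, pow_one]
  -- cleared coefficient identities
  have hden1 : u * (u ^ 2 + z) ^ 2 ≠ 0 := mul_ne_zero hu0 (pow_ne_zero _ huz0)
  have hden2 : ((u ^ 2 + z) : F) ^ 2 ≠ 0 := pow_ne_zero _ huz0
  have hA1 : a₁ * (u * (u ^ 2 + z) ^ 2) = (u ^ 3 + z) ^ 2 := by
    rw [ha₁]; exact div_mul_cancel₀ _ hden1
  have hA2 : a₂ * ((u ^ 2 + z) ^ 2) = (u ^ 3 + z) ^ 2 := by
    rw [ha₂]; exact div_mul_cancel₀ _ hden2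
  have hA3 : a₃ * ((u ^ 2 + z) ^ 2) = u * z ^ 2 * (u + 1) ^ 2 := by
    rw [ha₃]; exact div_mul_cancel₀ _ hden2
  have ha1' : a₁ = u + a₃ * v ^ 2 := by
    have key1 : (a₁ - (u + a₃ * v ^ 2)) * (u * (u ^ 2 + z) ^ 2) = 0 := by
      linear_combination hA1 + (-(u*v^2)) * hA3 +
        (-z^2 - 2*u*z^2 - u*z^2*v - u^2*z^2 - 2*u^2*z^2*v - u^3*z^2*v) * hv +
        (-(u*z^2) - u^2*z^2 + u^3*z - u^4*z) * h2
    have := (mul_eq_zero.mp key1).resolve_right hden1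
    linear_combination this
  have ha2' : a₂ = u ^ 2 + a₃ * v := by
    have key2 : (a₂ - (u ^ 2 + a₃ * v)) * ((u ^ 2 + z) ^ 2) = 0 := by
      linear_combination hA2 + (-v) * hA3 + (-z^2 - 2*u*z^2 - u^2*z^2) * hv +
        (-(u*z^2) - u^2*z^2 + u^3*z - u^4*z) * h2
    have := (mul_eq_zero.mp key2).resolve_right hden2
    linear_combination this
  have hroot : (a₃*v^2)^3 + a₁*(a₃*v^2)^2 + a₂*(a₃*v^2) + a₃ = 0 := by
    linear_combination (v^4*a₃^2) * ha1' + (v^2*a₃) * ha2' + (a₃ + v^3*a₃^2 + u*v*a₃) * hv +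
      (a₃ + v^3*a₃^2 + v^6*a₃^3) * h2
  by_cases hcase : a₃ = z
  · -- the function is not APN : contradiction
    exfalso
    rw [hcase] at hroot
    have hr1 : ((z*v^2) : F) ^ (2^m + 1) = 1 := by
      have hv1 : v ^ (2^m + 1) = 1 := by rw [pow_succ, hvQ]; exact hv
      rw [mul_pow, hz, ← pow_mul, mul_comm 2 (2^m+1), pow_mul, hv1, one_pow, one_mul]
    have hrne : ((z*v^2) : F) ≠ 0 := mul_ne_zero hz0 (pow_ne_zero _ hv0)
    set rᵤ : Fˣ := Units.mk0 (z*v^2) hrne with hrudef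
    have hrU : rᵤ ^ (2^m + 1) = 1 := by
      apply Units.ext
      rw [Units.val_pow_eq_pow_val, Units.val_one, hrudef, Units.val_mk0]
      exact hr1
    obtain ⟨g, hg⟩ := IsCyclic.exists_generator (α := Fˣ)
    have hord : orderOf g = Fintype.card Fˣ := by
      rw [orderOf_eq_card_of_forall_mem_zpowers hg, Nat.card_eq_fintype_card]
    have hcardU : Fintype.card Fˣ = (2^m - 1) * (2^m + 1) := by
      rw [Fintype.card_units, hcard]
      have h1le : 1 ≤ (2:ℕ)^m := Nat.one_le_two_pow
      have hmm : (2:ℕ)^(2*m) = 2^m * 2^m := by rw [two_mul, pow_add]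
      rw [hmm]
      rcases Nat.exists_eq_add_of_le h1le with ⟨t, ht⟩
      rw [ht]
      have hle1 : 1 ≤ (1+t)*(1+t) := Nat.one_le_iff_ne_zero.mpr (by positivity)
      have hle2 : 1 ≤ 1+t := by omega
      zify [hle1, hle2]
      ring
    obtain ⟨k, hk⟩ : ∃ k : ℕ, g ^ k = rᵤ := by
      have hmem := hg rᵤ
      rw [← (isOfFinOrder_of_finite g).mem_powers_iff_mem_zpowers] at hmem
      exact (Submonoid.mem_powers_iff _ _).mp hmem
    have hdvd : orderOf g ∣ k * (2^m + 1) :=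
      orderOf_dvd_of_pow_eq_one (by rw [pow_mul, hk, hrU])
    rw [hord, hcardU] at hdvd
    have hpos : 0 < 2^m + 1 := Nat.succ_pos _
    have hdvd2 : (2^m - 1) ∣ k := (Nat.mul_dvd_mul_iff_right hpos).mp hdvd
    obtain ⟨j, hj⟩ := hdvd2
    have haQ1 : ((g^j : Fˣ) : F) ^ (2^m - 1) = z*v^2 := by
      have h1 : (g^j) ^ (2^m - 1) = rᵤ := by
        rw [← hk, hj, ← pow_mul, mul_comm j (2^m-1)]
      calc ((g^j : Fˣ) : F) ^ (2^m - 1) = (((g^j) ^ (2^m-1) : Fˣ) : F) := by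
              rw [← Units.val_pow_eq_pow_val]
        _ = z*v^2 := by rw [h1, hrudef, Units.val_mk0]
    set a : F := ((g^j : Fˣ) : F) with hadef
    have ha0 : a ≠ 0 := Units.ne_zero _
    have haQ : a ^ (2^m) = (z*v^2) * a := by
      have h1 : a ^ (2^m) = a ^ (2^m - 1) * a := by
        rw [← pow_succ]
        congr 1
        have : 1 ≤ (2:ℕ)^m := Nat.one_le_two_pow
        omega
      rw [h1, haQ1]
    have hf0 : f 0 = 0 := by
      rw [hf]
      rw [zero_pow (by positivity), zero_pow (by positivity), zero_pow (by positivity),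
        zero_pow (by positivity)]
      ring
    have hfa : f a = 0 := by
      rw [hf]
      have e3 : a^(3*2^m) = ((z*v^2)*a)^3 := by rw [mul_comm 3 (2^m), pow_mul, haQ]
      have e2 : a^(2*2^m+1) = ((z*v^2)*a)^2*a := by
        rw [pow_add, pow_one, mul_comm 2 (2^m), pow_mul, haQ]
      have e1 : a^(2^m+2) = ((z*v^2)*a)*a^2 := by rw [pow_add, haQ]
      rw [e3, e2, e1, hcase]
      linear_combination (a^3) * hroot
    have hfω : ∀ x : F, f (ω*x) = f x := by
      intro x
      have w3 : ω^(3*2^m) = 1 := by rw [mul_comm 3 (2^m), pow_mul, hωQ, hω3]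
      have w2 : ω^(2*2^m+1) = 1 := by
        rw [pow_add, pow_one, mul_comm 2 (2^m), pow_mul, hωQ]
        linear_combination hω3
      have w1 : ω^(2^m+2) = 1 := by
        rw [pow_add, hωQ]
        linear_combination hω3
      rw [hf, hf, mul_pow, mul_pow, mul_pow, mul_pow, w3, w2, w1, hω3]
      ring
    have hsol : ({0, a, ω*a} : Set F) ⊆ {x : F | f (x + a) + f x = 0} := by
      intro x hx
      simp only [Set.mem_insert_iff, Set.mem_singleton_iff] at hx
      rcases hx with rfl | rfl | rfl
      · show f (0 + a) + f 0 = 0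
        rw [zero_add, hfa, hf0, add_zero]
      · show f (a + a) + f a = 0
        have haa : a + a = 0 := by linear_combination a * h2
        rw [haa, hf0, hfa, add_zero]
      · show f (ω*a + a) + f (ω*a) = 0
        have hstep : ω*a + a = ω*(ω*a) := by
          linear_combination (-a) * hω0 + (a*ω + a) * h2
        rw [hstep, hfω (ω*a)]
        linear_combination (f (ω*a)) * h2
    have hne1 : (0:F) ≠ a := fun h => ha0 h.symm
    have hne2 : (0:F) ≠ ω*a := fun h => (mul_ne_zero hωne0 ha0) h.symm
    have hne3 : a ≠ ω*a := by
      intro h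
      apply hω1
      have h1 : ω*a = 1*a := by rw [one_mul, ← h]
      exact mul_right_cancel₀ ha0 h1
    have hcard3 : ({0, a, ω*a} : Set F).ncard = 3 := by
      rw [Set.ncard_insert_of_notMem (by simp [hne1, hne2]) (Set.toFinite _),
        Set.ncard_insert_of_notMem (by simp [hne3]) (Set.toFinite _),
        Set.ncard_singleton]
    have hle := hAPN a ha0 0
    have hge : 3 ≤ ({x : F | f (x + a) + f x = 0}).ncard := by
      rw [← hcard3]
      exact Set.ncard_le_ncard hsol (Set.toFinite _)
    omega
  · -- a₃ ≠ z : f is affine equivalent to the Gold function x ^ (2^(m-1)+1)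
    right
    set c : F := ω * v with hcdef
    set β : F := ω^2*u^2 + ω*a₃*v with hβdef
    set γ : F := ω^2*a₃*v^2 + ω*u with hγdef
    have hcQ : c ^ (2^m) = ω * u := by rw [hcdef, mul_pow, hωQ, hvQ]
    -- Frobenius of a₃
    have hvzi : v^2 + zi ≠ 0 := by
      intro h0
      have hvz : u^2*z*(v^2+zi) = u^2+z := by
        linear_combination (z + u*z*v) * hv + (u^2) * hzi
      rw [h0, mul_zero] at hvz
      exact huz0 hvz.symm
    have e1q : ((u^2+z)^2) ^ (2^m) = (v^2+zi)^2 := by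
      rw [hswap, hfq, hswap, huQ, hzQ]
    have e2q : ((u+1) : F) ^ (2^m) = v + 1 := by rw [hfq, huQ, one_pow]
    have hQA3 : a₃ ^ (2^m) * ((v^2+zi)^2) = v*zi^2*(v+1)^2 := by
      calc a₃ ^ (2^m) * ((v^2+zi)^2) = (a₃*(u^2+z)^2) ^ (2^m) := by rw [mul_pow, e1q]
        _ = (u*z^2*(u+1)^2) ^ (2^m) := by rw [hA3]
        _ = v*zi^2*(v+1)^2 := by
            rw [mul_pow, mul_pow, huQ, hswap, hswap, e2q, hzQ]
    have ha3Q : a₃ ^ (2^m) = a₃ * zi^2 := by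
      have key3 : (a₃^(2^m) - a₃*zi^2) * ((v^2+zi)^2 * (u^4*z^4)) = 0 := by
        linear_combination (u^4*z^4) * hQA3 +
          (-(z^4*zi^2*a₃) + u*z^4*zi^2 - u*z^4*v*zi^2*a₃ + 2*u^2*z^4*zi^2 - 2*u^2*z^4*zi^3*a₃ +
            u^2*z^4*v*zi^2 - u^2*z^4*v^2*zi^2*a₃ + u^3*z^4*zi^2 + 2*u^3*z^4*v*zi^2 -
            2*u^3*z^4*v*zi^3*a₃ + u^3*z^4*v^2*zi^2 - u^3*z^4*v^3*zi^2*a₃) * hv +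
          (-(z^2*a₃) - z^3*zi*a₃ + u*z^2 + u*z^3*zi - 2*u^2*z*a₃ + 2*u^2*z^2 - 2*u^2*z^2*zi*a₃ +
            2*u^2*z^3*zi - 2*u^2*z^3*zi^2*a₃ + u^3*z^2 + u^3*z^3*zi - u^4*a₃ - u^4*z*zi*a₃ -
            u^4*z^2*zi^2*a₃ - u^4*z^3*zi^3*a₃) * hzi +
          (-1 : F) * hA3
      have hnz : ((v^2+zi)^2 * (u^4*z^4)) ≠ 0 :=
        mul_ne_zero (pow_ne_zero _ hvzi) (mul_ne_zero (pow_ne_zero _ hu0) (pow_ne_zero _ hz0))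
      have := (mul_eq_zero.mp key3).resolve_right hnz
      linear_combination this
    have hβQ : β ^ (2^m) = ω^2*v^2 + ω*(a₃*zi^2)*u := by
      rw [hβdef, hfq, mul_pow, mul_pow, mul_pow, hswap, hswap, hωQ, huQ, ha3Q, hvQ]
    have hγQ : γ ^ (2^m) = ω^2*(a₃*zi^2)*u^2 + ω*v := by
      rw [hγdef, hfq, mul_pow, mul_pow, mul_pow, hswap, hswap, hωQ, hvQ, ha3Q, huQ]
    have hβγ : β^(2^m)*β + γ^(2^m)*γ = (a₃+z)^2*zi^2 := by
      rw [hβQ, hγQ, hβdef, hγdef]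
      linear_combination
        (-(2*v^3*a₃) + u*v + u*v*zi^2*a₃^2 - 2*u^3*zi^2*a₃ + 2*ω*v^3*a₃ - ω*u^2*v^2 -
          ω*u^2*v^2*zi^2*a₃^2 + 2*ω*u^3*zi^2*a₃ + ω^2*u^2*v^2 + ω^2*u^2*v^2*zi^2*a₃^2) * hω0 +
        (-1 - zi^2*a₃^2 + ω*u*v + ω*u*v*zi^2*a₃^2) * hv +
        (-1 - 2*zi*a₃ - z*zi) * hzi +
        (-1 - zi*a₃ - zi^2*a₃^2 + v^3*a₃ + u^3*zi^2*a₃) * h2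
    -- the linear maps
    set M₂ : F → F := fun x => x + c * x^(2^m) with hM₂def
    set M₁ : F → F := fun x => β * x^2 + γ * (x^2)^(2^m) with hM₁def
    have hM₂add : ∀ x y : F, M₂ (x+y) = M₂ x + M₂ y := by
      intro x y
      simp only [hM₂def]
      rw [hfq]
      ring
    have hM₁add : ∀ x y : F, M₁ (x+y) = M₁ x + M₁ y := by
      intro x y
      simp only [hM₁def]
      rw [hsq, hfq]
      ring
    have hM₂0 : M₂ 0 = 0 := by
      simp only [hM₂def]
      rw [zero_pow (by positivity)]
      ring
    have hM₁0 : M₁ 0 = 0 := by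
      simp only [hM₁def]
      rw [zero_pow (by norm_num : (2:ℕ) ≠ 0), zero_pow (by positivity)]
      ring
    have hM₂inj : Function.Injective M₂ := by
      intro x x' hxx
      by_contra hne
      have hd0 : x + x' ≠ 0 := by
        intro h
        exact hne (by linear_combination h - x'*h2)
      simp only [hM₂def] at hxx
      have hd : (x+x') = c*(x+x')^(2^m) := by
        rw [hfq]
        linear_combination hxx + (x' - c*x^(2^m)) * h2
      have hdQ : (x+x')^(2^m) = c^(2^m) * (x+x') := by
        have h1 := congrArg (fun w : F => w^(2^m)) hd
        rw [mul_pow, ← pow_mul, hpowcard] at h1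
        exact h1
      rw [hdQ] at hd
      have hccQ : (c*c^(2^m)) * (x+x') = 1 * (x+x') := by
        rw [one_mul]
        linear_combination (-1 : F) * hd
      have hccQ1 : c*c^(2^m) = 1 := mul_right_cancel₀ hd0 hccQ
      rw [hcQ, hcdef] at hccQ1
      exact hω2ne (by linear_combination hccQ1 - ω^2*hv)
    have hM₁inj : Function.Injective M₁ := by
      intro y y' hyy
      by_contra hne
      have hd0 : y + y' ≠ 0 := by
        intro h
        exact hne (by linear_combination h - y'*h2)
      simp only [hM₁def] at hyy
      have hd2eq : (y+y')^2 = y^2 + y'^2 := hsq y y'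
      have hstep : β*(y+y')^2 = γ*((y+y')^2)^(2^m) := by
        rw [hd2eq, hfq]
        linear_combination hyy + (β*y'^2 - γ*(y^2)^(2^m)) * h2
      have hstepQ : β^(2^m)*((y+y')^2)^(2^m) = γ^(2^m)*(y+y')^2 := by
        have h1 := congrArg (fun w : F => w^(2^m)) hstep
        rw [mul_pow, mul_pow, ← pow_mul ((y+y')^2), hpowcard] at h1
        exact h1
      have hd2 : (y+y')^2 ≠ 0 := pow_ne_zero _ hd0
      have hd2Q : ((y+y')^2)^(2^m) ≠ 0 := pow_ne_zero _ hd2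
      have hBB : β^(2^m)*β = γ^(2^m)*γ := by
        have hmul : (β^(2^m)*β)*((y+y')^2*((y+y')^2)^(2^m))
            = (γ^(2^m)*γ)*((y+y')^2*((y+y')^2)^(2^m)) := by
          linear_combination (β^(2^m)*((y+y')^2)^(2^m)) * hstep + (γ*((y+y')^2)^(2^m)) * hstepQ
        exact mul_right_cancel₀ (mul_ne_zero hd2 hd2Q) hmul
      have hzero : ((a₃+z)^2*zi^2 : F) = 0 := by
        linear_combination (-1 : F) * hβγ + hBB + (γ^(2^m)*γ) * h2
      have ha3z : a₃ = z := by
        have hh1 : ((a₃+z)^2 : F) = 0 :=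
          (mul_eq_zero.mp hzero).resolve_right (pow_ne_zero _ hzi0)
        have hh2 : (a₃+z : F) = 0 := by
          exact pow_eq_zero_iff (by norm_num : (2:ℕ) ≠ 0) |>.mp hh1
        linear_combination hh2 - z*h2
      exact hcase ha3z
    have hM₂bij : Function.Bijective M₂ := (Finite.injective_iff_bijective).mp hM₂inj
    have hM₁bij : Function.Bijective M₁ := (Finite.injective_iff_bijective).mp hM₁inj
    -- the composition identity
    have hs2 : (2:ℕ)^(m-1) * 2 = 2^m := by
      rw [← pow_succ]
      congr 1
      omega
    have hcomp : ∀ x : F, f x = M₁ ((M₂ x)^(2^(m-1)+1)) := by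
      intro x
      have hyy : (x^(2^m))^(2^m) = x := by rw [← pow_mul]; exact hpowcard x
      have hB : ((M₂ x)^(2^(m-1)+1))^2
          = (x^(2^m) + (ω*u)*x) * (x^2 + c^2*(x^(2^m))^2) := by
        simp only [hM₂def]
        rw [pow_succ (x + c*x^(2^m)) (2^(m-1))]
        rw [mul_pow ((x + c*x^(2^m))^(2^(m-1))) (x + c*x^(2^m)) 2]
        rw [hfs x (c*x^(2^m))]
        rw [hsq (x^(2^(m-1))) ((c*x^(2^m))^(2^(m-1)))]
        rw [hsq x (c*x^(2^m))]
        rw [← pow_mul x (2^(m-1)) 2, hs2]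
        rw [← pow_mul (c*x^(2^m)) (2^(m-1)) 2, hs2]
        rw [mul_pow c (x^(2^m)) (2^m), hcQ, hyy]
        rw [mul_pow c (x^(2^m)) 2]
      have hC : (((M₂ x)^(2^(m-1)+1))^2)^(2^m)
          = (x + c*x^(2^m)) * ((x^(2^m))^2 + (ω*u)^2*x^2) := by
        rw [hB, mul_pow, hfq, hfq]
        rw [mul_pow (ω*u) x (2^m), mul_pow ω u (2^m), hωQ, huQ, hyy]
        rw [hswap x]
        rw [mul_pow (c^2) ((x^(2^m))^2) (2^m), hswap c, hcQ, hswap (x^(2^m)), hyy]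
      rw [hf x]

      show _ = β*((M₂ x)^(2^(m-1)+1))^2 + γ*(((M₂ x)^(2^(m-1)+1))^2)^(2^m)
      rw [hC, hB]
      have ex3 : x^(3*2^m) = (x^(2^m))^3 := by rw [mul_comm 3 (2^m), pow_mul]
      have ex2 : x^(2*2^m+1) = (x^(2^m))^2*x := by
        rw [pow_add, pow_one, mul_comm 2 (2^m), pow_mul]
      have ex1 : x^(2^m+2) = x^(2^m)*x^2 := by rw [pow_add]
      rw [ex3, ex2, ex1]
      set y : F := x^(2^m) with hydef
      rw [hβdef, hγdef, hcdef]
      linear_combination (x*y^2) * ha1' + (x^2*y) * ha2' +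
        (-(v^2*a₃*x*y^2) + 2*v^3*a₃*y^3 - u*v*y^3 - u*v*a₃*x^3 - u^2*x^2*y - u^2*v^3*a₃*x^2*y +
          2*u^3*x^3 - u^3*v^2*x*y^2 - 2*ω*v^3*a₃*y^3 + ω*u*v^3*a₃*x*y^2 + ω*u^2*v^2*y^3 +
          ω*u^2*v^2*a₃*x^3 - 2*ω*u^3*x^3 + ω*u^3*v*x^2*y - ω^2*u*v^3*a₃*x*y^2 - ω^2*u^2*v^2*y^3 -
          ω^2*u^2*v^2*a₃*x^3 + ω^2*u^2*v^3*a₃*x^2*y - ω^2*u^3*v*x^2*y + ω^2*u^3*v^2*x*y^2 -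
          ω^3*u^2*v^3*a₃*x^2*y - ω^3*u^3*v^2*x*y^2) * hω0 +
        (y^3 + a₃*x^3 + v*a₃*x^2*y + u*x*y^2 + u*v^2*a₃*x^2*y + u^2*v*x*y^2 + ω*v*a₃*x^2*y -
          ω*v^2*a₃*x*y^2 + ω*u*x*y^2 - ω*u*v*y^3 - ω*u*v*a₃*x^3 + ω*u*v^2*a₃*x^2*y -
          ω*u^2*x^2*y + ω*u^2*v*x*y^2) * hv +
        (y^3 + a₃*x^3 + v*a₃*x^2*y + v^2*a₃*x*y^2 - v^3*a₃*y^3 + u*x*y^2 + u^2*x^2*y -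
          u^3*x^3) * h2
    -- assemble the affine equivalence
    set E₁ : F ≃ F := Equiv.ofBijective M₁ hM₁bij with hE₁def
    set E₂ : F ≃ F := Equiv.ofBijective M₂ hM₂bij with hE₂def
    have hE₁app : ∀ x : F, E₁ x = M₁ x := fun x => rfl
    have hE₂app : ∀ x : F, E₂ x = M₂ x := fun x => rfl
    have hE₁0 : E₁.symm 0 = 0 := by
      have h1 : E₁ 0 = 0 := by rw [hE₁app]; exact hM₁0
      exact (Equiv.symm_apply_eq E₁).mpr h1.symm
    have hE₂0 : E₂.symm 0 = 0 := by
      have h1 : E₂ 0 = 0 := by rw [hE₂app]; exact hM₂0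
      exact (Equiv.symm_apply_eq E₂).mpr h1.symm
    refine ⟨fun w => E₁.symm w, fun w => E₂.symm w, ⟨E₁.symm.bijective, ?_⟩,
      ⟨E₂.symm.bijective, ?_⟩, ?_⟩
    · intro x y
      show E₁.symm (x+y) + E₁.symm 0 = E₁.symm x + E₁.symm y
      rw [hE₁0, add_zero]
      apply E₁.injective
      rw [Equiv.apply_symm_apply, hE₁app, hM₁add, ← hE₁app (E₁.symm x), ← hE₁app (E₁.symm y),
        Equiv.apply_symm_apply, Equiv.apply_symm_apply]
    · intro x y
      show E₂.symm (x+y) + E₂.symm 0 = E₂.symm x + E₂.symm y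
      rw [hE₂0, add_zero]
      apply E₂.injective
      rw [Equiv.apply_symm_apply, hE₂app, hM₂add, ← hE₂app (E₂.symm x), ← hE₂app (E₂.symm y),
        Equiv.apply_symm_apply, Equiv.apply_symm_apply]
    · intro x
      show x^(2^(m-1)+1) = E₁.symm (f (E₂.symm x))
      rw [hcomp (E₂.symm x)]
      have hMx : M₂ (E₂.symm x) = x := by
        rw [← hE₂app, Equiv.apply_symm_apply]
      rw [hMx, ← hE₁app, Equiv.symm_apply_apply]
end

section
/- Let m ≥ 4, q = 2^m, and let f : F_{q²} → F_{q²} be given by f(x) = x^{3q} + a₁x^{2q+1} + a₂x^{q+2} + a₃x³ where a₁, a₂, a₃ ∈ F_q. If f is APN, then f is affine equivalent to a function of the form f₁(x) = x^{3q} + c₁x^{2q+1} + c₂x^{q+2} with c₁, c₂ ∈ F_q, or to a function of the form f₂(x) = x^{3q} + c₂x^{q+2} + x³ with c₂ ∈ F_q. -/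
/-- A Kim-type APN function with coefficients in the subfield `𝔽_q` is affine equivalent to
a function of the form `f₁(x) = x^{3q} + c₁x^{2q+1} + c₂x^{q+2}` or of the form
`f₂(x) = x^{3q} + c₂x^{q+2} + x³` with `c₁, c₂ ∈ 𝔽_q`. Here `q = 2^m`, `m ≥ 4`, and
membership in `𝔽_q` is expressed as `a^(2^m) = a`. -/
theorem kim_type_subfield_normal_form
    (m : ℕ) (hm : 4 ≤ m) (F : Type*) [Field F] [Fintype F]
    (hcard : Fintype.card F = 2 ^ (2 * m))
    (a₁ a₂ a₃ : F)
    (ha₁ : a₁ ^ (2 ^ m) = a₁) (ha₂ : a₂ ^ (2 ^ m) = a₂) (ha₃ : a₃ ^ (2 ^ m) = a₃)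
    (f : F → F)
    (hf : ∀ x : F, f x = x ^ (3 * 2 ^ m) + a₁ * x ^ (2 * 2 ^ m + 1)
        + a₂ * x ^ (2 ^ m + 2) + a₃ * x ^ 3)
    (hAPN : IsAPN f) :
    (∃ c₁ c₂ : F, c₁ ^ (2 ^ m) = c₁ ∧ c₂ ^ (2 ^ m) = c₂ ∧
        AffEquiv f (fun x : F => x ^ (3 * 2 ^ m) + c₁ * x ^ (2 * 2 ^ m + 1)
          + c₂ * x ^ (2 ^ m + 2))) ∨
    (∃ c₂ : F, c₂ ^ (2 ^ m) = c₂ ∧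
        AffEquiv f (fun x : F => x ^ (3 * 2 ^ m) + c₂ * x ^ (2 ^ m + 2) + x ^ 3)) := by
  -- characteristic 2
  have hchar : CharP F 2 := by
    obtain ⟨p, hp⟩ := CharP.exists F
    haveI := hp
    haveI : Fact p.Prime := ⟨CharP.char_is_prime F p⟩
    obtain ⟨n, hc⟩ := FiniteField.card F p
    have hpd : p ∣ 2 ^ (2 * m) := by
      rw [← hcard, hc.2]; exact dvd_pow_self p n.2.ne'
    have hp2 : p = 2 := (Nat.prime_dvd_prime_iff_eq hc.1 Nat.prime_two).mp
      (hc.1.dvd_of_dvd_pow hpd)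
    exact hp2 ▸ hp
  haveI := hchar
  have h2 : (2 : F) = 0 := by exact_mod_cast CharP.cast_eq_zero F 2
  have hadd : ∀ x y : F, (x + y) ^ (2 ^ m) = x ^ (2 ^ m) + y ^ (2 ^ m) :=
    fun x y => add_pow_char_pow x y 2 m
  have hqne : (2 : ℕ) ^ m ≠ 0 := (pow_pos (by norm_num) m).ne'
  have hK : ∀ x : F, (x ^ (2 ^ m)) ^ (2 ^ m) = x := by
    intro x
    rw [← pow_mul, show 2 ^ m * 2 ^ m = 2 ^ (2 * m) by rw [← pow_add, two_mul], ← hcard]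
    exact FiniteField.pow_card x
  -- conjugates of the four monomials
  have hA : ∀ x : F, (x ^ (3 * 2 ^ m)) ^ (2 ^ m) = x ^ 3 := by
    intro x
    rw [← pow_mul, show 3 * 2 ^ m * 2 ^ m = 2 ^ m * 2 ^ m * 3 by ring, pow_mul, pow_mul, hK]
  have hB : ∀ x : F, (x ^ (2 * 2 ^ m + 1)) ^ (2 ^ m) = x ^ (2 ^ m + 2) := by
    intro x
    rw [← pow_mul, show (2 * 2 ^ m + 1) * 2 ^ m = 2 ^ m * 2 ^ m * 2 + 2 ^ m by ring,
      pow_add, pow_mul, pow_mul, hK]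
    rw [pow_add]; ring
  have hC : ∀ x : F, (x ^ (2 ^ m + 2)) ^ (2 ^ m) = x ^ (2 * 2 ^ m + 1) := by
    intro x
    rw [← pow_mul, show (2 ^ m + 2) * 2 ^ m = 2 ^ m * 2 ^ m + 2 ^ m * 2 by ring,
      pow_add, pow_mul, pow_mul, hK]
    rw [pow_add, pow_mul]; ring
  have hD : ∀ x : F, (x ^ 3) ^ (2 ^ m) = x ^ (3 * 2 ^ m) := by
    intro x; rw [← pow_mul]
  have hfq : ∀ x : F, (f x) ^ (2 ^ m)
      = a₃ * x ^ (3 * 2 ^ m) + a₂ * x ^ (2 * 2 ^ m + 1) + a₁ * x ^ (2 ^ m + 2) + x ^ 3 := by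
    intro x
    rw [hf x, hadd, hadd, hadd, mul_pow, mul_pow, mul_pow, hA, hB, hC, hD, ha₁, ha₂, ha₃]
    ring
  -- affine permutation lemma
  have permLemma : ∀ γ α β : F, γ ≠ 0 → α ^ (2 ^ m) = α → β ^ (2 ^ m) = β → α ^ 2 ≠ β ^ 2 →
      IsAffinePerm (fun y : F => γ * (α * y + β * y ^ (2 ^ m))) := by
    intro γ α β hγ hα hβ hne
    constructor
    · apply Finite.injective_iff_bijective.mp
      intro y z hyz
      simp only at hyz
      have hyz' : α * (y - z) + β * ((y - z) ^ (2 ^ m)) = 0 := by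
        rw [sub_pow_char_pow y z m (p := 2)]
        have := mul_left_cancel₀ hγ hyz
        linear_combination this
      by_contra hne'
      have hw : y - z ≠ 0 := sub_ne_zero.mpr hne'
      set w := y - z with hwdef
      have hE2 : α * w ^ (2 ^ m) + β * w = 0 := by
        have h0 := congrArg (· ^ (2 ^ m)) hyz'
        rwa [hadd, mul_pow, mul_pow, hα, hβ, hK, zero_pow hqne] at h0
      have hzero : (α ^ 2 - β ^ 2) * w = 0 := by
        linear_combination α * hyz' - β * hE2
      rcases mul_eq_zero.mp hzero with h | h
      · exact hne (by linear_combination h)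
      · exact hw h
    · intro x y
      simp only
      rw [hadd, zero_pow hqne]
      ring
  have idPerm : IsAffinePerm (fun y : F => y) := ⟨Function.bijective_id, fun x y => by simp⟩
  by_cases ha3 : a₃ = 1
  · subst ha3
    by_cases h12 : a₁ = a₂
    · -- contradiction with APN
      exfalso
      subst h12
      have hS0 : (0 : F) ^ (2 ^ m) = 0 := zero_pow hqne
      have hS1 : (1 : F) ^ (2 ^ m) = 1 := one_pow _
      have hfS : ∀ x : F, x ^ (2 ^ m) = x → f x = 0 := by
        intro x hx
        rw [hf x]
        have e1 : x ^ (3 * 2 ^ m) = x ^ 3 := by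
          rw [mul_comm, pow_mul, hx]
        have e2 : x ^ (2 * 2 ^ m + 1) = x ^ 3 := by
          rw [show 2 * 2 ^ m + 1 = 2 ^ m * 2 + 1 by ring, pow_add, pow_mul, hx]; ring
        have e3 : x ^ (2 ^ m + 2) = x ^ 3 := by
          rw [pow_add, hx]; ring
        rw [e1, e2, e3]
        linear_combination ((1 + a₁) * x ^ 3) * h2
      -- there is an element of the subfield other than 0 and 1
      have hbig : ∃ s : F, s ^ (2 ^ m) = s ∧ s ≠ 0 ∧ s ≠ 1 := by
        by_contra hsmall
        push_neg at hsmall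
        have hsmall' : ∀ s : F, s ^ (2 ^ m) = s → s = 0 ∨ s = 1 := by
          intro s hs
          by_cases h0 : s = 0
          · exact Or.inl h0
          · exact Or.inr (hsmall s hs h0)
        have hψ : ∀ x : F, x ^ (2 ^ m) + x = 0 ∨ x ^ (2 ^ m) + x = 1 := by
          intro x
          refine hsmall' _ ?_
          rw [hadd, hK]; ring
        have hcard4 : Fintype.card F ≤ 4 := by
          by_cases hex : ∃ t : F, t ^ (2 ^ m) + t = 1
          · obtain ⟨t, ht⟩ := hex
            have hsub : (Set.univ : Set F) ⊆ {0, 1, t, t + 1} := by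
              intro x _
              rcases hψ x with h | h
              · have hx : x ^ (2 ^ m) = x := by linear_combination h - x * h2
                rcases hsmall' x hx with h0 | h1
                · exact Or.inl h0
                · exact Or.inr (Or.inl h1)
              · have hxt : (x + t) ^ (2 ^ m) = x + t := by
                  rw [hadd]; linear_combination h + ht + (1 - x - t) * h2
                rcases hsmall' _ hxt with h0 | h1
                · exact Or.inr (Or.inr (Or.inl (by linear_combination h0 - t * h2)))
                · exact Or.inr (Or.inr (Or.inr (by
                    simp only [Set.mem_singleton_iff]
                    linear_combination h1 - t * h2)))
            have h1 : (Set.univ : Set F).ncard ≤ ({0, 1, t, t + 1} : Set F).ncard :=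
              Set.ncard_le_ncard hsub (Set.toFinite _)
            have h2' : ({0, 1, t, t + 1} : Set F).ncard ≤ 4 := by
              calc ({0, 1, t, t + 1} : Set F).ncard
                  ≤ ({1, t, t + 1} : Set F).ncard + 1 := Set.ncard_insert_le _ _
                _ ≤ (({t, t + 1} : Set F).ncard + 1) + 1 := by
                    exact Nat.add_le_add_right (Set.ncard_insert_le _ _) 1
                _ ≤ ((({t + 1} : Set F).ncard + 1) + 1) + 1 := by
                    exact Nat.add_le_add_right (Nat.add_le_add_right (Set.ncard_insert_le _ _) 1) 1
                _ = 4 := by rw [Set.ncard_singleton]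
            rw [Set.ncard_univ, Nat.card_eq_fintype_card] at h1
            omega
          · push_neg at hex
            have hsub : (Set.univ : Set F) ⊆ {0, 1} := by
              intro x _
              rcases hψ x with h | h
              · have hx : x ^ (2 ^ m) = x := by linear_combination h - x * h2
                rcases hsmall' x hx with h0 | h1
                · exact Or.inl h0
                · exact Or.inr h1
              · exact absurd h (hex x)
            have h1 : (Set.univ : Set F).ncard ≤ ({0, 1} : Set F).ncard :=
              Set.ncard_le_ncard hsub (Set.toFinite _)
            have h2' : ({0, 1} : Set F).ncard ≤ 2 := by
              calc ({0, 1} : Set F).ncard ≤ ({1} : Set F).ncard + 1 := Set.ncard_insert_le _ _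
                _ = 2 := by rw [Set.ncard_singleton]
            rw [Set.ncard_univ, Nat.card_eq_fintype_card] at h1
            omega
        rw [hcard] at hcard4
        have h8 : (2 : ℕ) ^ 8 ≤ 2 ^ (2 * m) := Nat.pow_le_pow_right (by norm_num) (by omega)
        norm_num at h8
        omega
      obtain ⟨s, hs, hs0, hs1⟩ := hbig
      have key := hAPN 1 one_ne_zero 0
      have h11 : (1 : F) + 1 = 0 := by linear_combination h2
      have hsub3 : ({0, 1, s} : Set F) ⊆ {x : F | f (x + 1) + f x = 0} := by
        intro x hx
        simp only [Set.mem_insert_iff, Set.mem_singleton_iff] at hx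
        simp only [Set.mem_setOf_eq]
        rcases hx with rfl | rfl | rfl
        · rw [zero_add, hfS 1 hS1, hfS 0 hS0]; ring
        · rw [h11, hfS 0 hS0, hfS 1 hS1]; ring
        · have hs1' : (x + 1) ^ (2 ^ m) = x + 1 := by rw [hadd, hs, hS1]
          rw [hfS _ hs1', hfS x hs]; ring
      have h3 : ({0, 1, s} : Set F).ncard = 3 := by
        rw [Set.ncard_insert_of_notMem (by simp [one_ne_zero.symm, Ne.symm hs0]),
          Set.ncard_insert_of_notMem (by simp [Ne.symm hs1]), Set.ncard_singleton]
      have hle := Set.ncard_le_ncard hsub3 (Set.toFinite _)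
      rw [h3] at hle
      omega
    · -- second normal form, c₂ = a₁ + a₂
      right
      have hne0 : a₁ + a₂ ≠ 0 := by
        intro h; exact h12 (by linear_combination h - a₂ * h2)
      have hγ : (a₁ + a₂)⁻¹ ≠ 0 := inv_ne_zero hne0
      have hγ' : (a₁ + a₂)⁻¹ * (a₁ + a₂) = 1 := inv_mul_cancel₀ hne0
      have hfix : ((a₁ + a₂)⁻¹ : F) ^ (2 ^ m) = (a₁ + a₂)⁻¹ := by
        rw [inv_pow, hadd, ha₁, ha₂]
      refine ⟨a₁ + a₂, by rw [hadd, ha₁, ha₂], ?_⟩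
      refine ⟨fun y => (a₁ + a₂)⁻¹ * (a₂ * y + a₁ * y ^ (2 ^ m)), fun y => y,
        permLemma _ _ _ hγ ha₂ ha₁ ?_, idPerm, ?_⟩
      · intro h
        apply h12
        have hsq : (a₁ - a₂) ^ 2 = 0 := by linear_combination h + (a₁ * (a₁ - a₂)) * h2
        have := pow_eq_zero_iff (n := 2) (by norm_num) |>.mp hsq
        linear_combination this
      · intro x
        simp only
        rw [hfq x, hf x]
        linear_combination
          (-(x ^ (3 * 2 ^ m) + x ^ 3 + (a₁ + a₂) * x ^ (2 ^ m + 2))) * hγ'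
          + ((a₁ + a₂)⁻¹ * a₁ * a₂ * (x ^ (2 ^ m + 2) - x ^ (2 * 2 ^ m + 1))) * h2
  · -- first normal form
    left
    have h1a : (1 : F) + a₃ ≠ 0 := by
      intro h; exact ha3 (by linear_combination h - h2)
    have hden : (1 : F) + a₃ ^ 2 ≠ 0 := by
      intro h
      apply h1a
      have hsq : ((1 : F) + a₃) ^ 2 = 0 := by linear_combination h + a₃ * h2
      exact pow_eq_zero_iff (n := 2) (by norm_num) |>.mp hsq
    have hγ : ((1 : F) + a₃ ^ 2)⁻¹ ≠ 0 := inv_ne_zero hden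
    have hγ' : ((1 : F) + a₃ ^ 2)⁻¹ * (1 + a₃ ^ 2) = 1 := inv_mul_cancel₀ hden
    have hfixden : ((1 : F) + a₃ ^ 2) ^ (2 ^ m) = 1 + a₃ ^ 2 := by
      rw [hadd, one_pow, ← pow_mul, mul_comm (2 : ℕ), pow_mul, ha₃]
    have hfixinv : (((1 : F) + a₃ ^ 2)⁻¹) ^ (2 ^ m) = (1 + a₃ ^ 2)⁻¹ := by
      rw [inv_pow, hfixden]
    refine ⟨(a₁ + a₃ * a₂) * (1 + a₃ ^ 2)⁻¹, (a₂ + a₃ * a₁) * (1 + a₃ ^ 2)⁻¹, ?_, ?_, ?_⟩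
    · rw [mul_pow, hadd, mul_pow, ha₁, ha₂, ha₃, hfixinv]
    · rw [mul_pow, hadd, mul_pow, ha₁, ha₂, ha₃, hfixinv]
    · refine ⟨fun y => (1 + a₃ ^ 2)⁻¹ * (1 * y + a₃ * y ^ (2 ^ m)), fun y => y,
        permLemma _ _ _ hγ (one_pow _) ha₃ ?_, idPerm, ?_⟩
      · intro h
        apply ha3
        have hsq : (a₃ - 1) ^ 2 = 0 := by linear_combination -h + (1 - a₃) * h2
        have := pow_eq_zero_iff (n := 2) (by norm_num) |>.mp hsq
        linear_combination this
      · intro x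
        simp only
        rw [hfq x, hf x]
        linear_combination
          (-(x ^ (3 * 2 ^ m))) * hγ' + (-((1 + a₃ ^ 2)⁻¹ * a₃ * x ^ 3)) * h2
end

section
/- Let m ≥ 4 and q = 2^m. For any r ∈ F_q with r ∉ F₄, setting b = (r+1)³/(r³+1) ∈ F_q, the function F₁ : F_{q²} → F_{q²} given by F₁(x) = x^{3q} + (b² + b)x^{2q+1} + (b+1)²x^{q+2} is affine equivalent to G₁(x) = x³. In fact, with L₁(x) = x^q + rx and L₂(x) = r³x^q + x, one has L₂(G₁(L₁(x))) = (r⁶+1)·F₁(x) for all x ∈ F_{q²}, and L₁, L₂ are bijections of F_{q²}. -/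
lemma key_identity_s13 {F : Type*} [Field F] (h2 : (2:F) = 0) (r b A x : F)
    (hbs : b * (r^2 + r + 1) = (r+1)^2) :
    r^3 * (x + r*A)^3 + (A + r*x)^3
      = (r^6+1) * (A^3 + (b^2+b)*A^2*x + (b+1)^2*A*x^2) := by
  linear_combination ((1:F)*A*x^2 + (1:F)*A*x^2*b + (1:F)*A*x^2*r*b + (1:F)*A*x^2*r^3*b + (1:F)*A*x^2*r^4 + (1:F)*A*x^2*r^4*b + (1:F)*A^2*x*b + (1:F)*A^2*x*r + (1:F)*A^2*x*r*b + (1:F)*A^2*x*r^3 + (1:F)*A^2*x*r^3*b + (1:F)*A^2*x*r^4*b) * hbs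
    + ((1:F)*x^3*r^3 + (-1:F)*A*x^2*b + (-1:F)*A*x^2*b^2 + (1:F)*A*x^2*r + (1:F)*A*x^2*r*b + (-1:F)*A*x^2*r*b^2 + (2:F)*A*x^2*r^2 + (1:F)*A*x^2*r^2*b + (-1:F)*A*x^2*r^2*b^2 + (1:F)*A*x^2*r^3*b + (-1:F)*A*x^2*r^3*b^2 + (2:F)*A*x^2*r^4 + (1:F)*A*x^2*r^4*b + (-1:F)*A*x^2*r^4*b^2 + (1:F)*A*x^2*r^5 + (1:F)*A*x^2*r^5*b + (-1:F)*A*x^2*r^5*b^2 + (-1:F)*A*x^2*r^6*b + (-1:F)*A*x^2*r^6*b^2 + (-1:F)*A^2*x*b^2 + (2:F)*A^2*x*r + (1:F)*A^2*x*r*b + (-1:F)*A^2*x*r*b^2 + (1:F)*A^2*x*r^2 + (1:F)*A^2*x*r^2*b + (-1:F)*A^2*x*r^2*b^2 + (1:F)*A^2*x*r^3 + (-1:F)*A^2*x*r^3*b^2 + (1:F)*A^2*x*r^4 + (1:F)*A^2*x*r^4*b + (-1:F)*A^2*x*r^4*b^2 + (2:F)*A^2*x*r^5 + (1:F)*A^2*x*r^5*b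 + (-1:F)*A^2*x*r^5*b^2 + (-1:F)*A^2*x*r^6*b^2) * h2

/-- For `r ∈ 𝔽_q \ 𝔽₄` (expressed as `r^(2^m) = r` and `r⁴ ≠ r`), with
`b = (r+1)³/(r³+1)`, the function `F₁(x) = x^{3q} + (b²+b)x^{2q+1} + (b+1)²x^{q+2}` is
affine equivalent to `G₁(x) = x³`; moreover with `L₁(x) = x^q + rx`, `L₂(x) = r³x^q + x`
one has `L₂(G₁(L₁(x))) = (r⁶+1)·F₁(x)` and `L₁, L₂` are bijections. Here `q = 2^m`. -/
theorem F1_equiv_G1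
    (m : ℕ) (hm : 4 ≤ m) (F : Type*) [Field F] [Fintype F]
    (hcard : Fintype.card F = 2 ^ (2 * m))
    (r : F) (hr : r ^ (2 ^ m) = r) (hr4 : r ^ 4 ≠ r)
    (b : F) (hb : b = (r + 1) ^ 3 / (r ^ 3 + 1))
    (F₁ L₁ L₂ : F → F)
    (hF₁ : ∀ x : F, F₁ x = x ^ (3 * 2 ^ m) + (b ^ 2 + b) * x ^ (2 * 2 ^ m + 1)
        + (b + 1) ^ 2 * x ^ (2 ^ m + 2))
    (hL₁ : ∀ x : F, L₁ x = x ^ (2 ^ m) + r * x)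
    (hL₂ : ∀ x : F, L₂ x = r ^ 3 * x ^ (2 ^ m) + x) :
    AffEquiv F₁ (fun x : F => x ^ 3) ∧
    (∀ x : F, L₂ ((L₁ x) ^ 3) = (r ^ 6 + 1) * F₁ x) ∧
    Function.Bijective L₁ ∧ Function.Bijective L₂ := by
  have hm0 : m ≠ 0 := by omega
  -- characteristic 2
  have h2 : (2:F) = 0 := by
    have h0 : ((Fintype.card F : F)) = 0 := FiniteField.cast_card_eq_zero F
    rw [hcard] at h0
    push_cast at h0
    exact pow_eq_zero_iff (by omega : 2*m ≠ 0) |>.mp h0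
  have hdvd : ringChar F ∣ 2 := ringChar.dvd (by exact_mod_cast h2)
  have hrc : ringChar F = 2 :=
    ((Nat.dvd_prime Nat.prime_two).mp hdvd).resolve_left (CharP.ringChar_ne_one)
  haveI : CharP F 2 := hrc ▸ ringChar.charP F
  haveI : Fact (Nat.Prime 2) := ⟨Nat.prime_two⟩
  have hfrob : ∀ u v : F, (u+v)^(2^m) = u^(2^m) + v^(2^m) := fun u v =>
    add_pow_char_pow u v 2 m
  have hq2 : ∀ y : F, (y^(2^m))^(2^m) = y := by
    intro y
    have h22 : 2^m * 2^m = 2^(2*m) := by rw [← pow_add, two_mul]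
    rw [← pow_mul, h22, ← hcard, FiniteField.pow_card]
  -- nonvanishing facts
  have hne : r^4 - r ≠ 0 := sub_ne_zero.mpr hr4
  have hfac : r^4 - r = r * ((r - 1) * (r^2+r+1)) := by ring
  rw [hfac] at hne
  have hr0 : r ≠ 0 := fun h => hne (by rw [h]; ring)
  have hr1 : r - 1 ≠ 0 := fun h => hne (by rw [h]; ring)
  have hs : r^2+r+1 ≠ 0 := fun h => hne (by rw [h]; ring)
  have hr1' : r + 1 ≠ 0 := fun h => hr1 (by linear_combination h - h2)
  have hr31 : r^3 + 1 ≠ 0 := fun h =>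
    (mul_ne_zero hr1 hs) (by linear_combination h - h2)
  have hc6 : r^6 + 1 ≠ 0 := fun h =>
    (mul_ne_zero hr31 hr31) (by linear_combination h + r^3 * h2)
  -- the b relation
  have hb3 : b * (r^3+1) = (r+1)^3 := by rw [hb]; field_simp
  have hbs : b * (r^2 + r + 1) = (r+1)^2 := by
    apply mul_left_cancel₀ hr1
    linear_combination hb3 + ((r+1)^2 - b) * h2
  -- main identity
  have hmain : ∀ x : F, L₂ ((L₁ x)^3) = (r^6+1) * F₁ x := by
    intro x
    rw [hL₂, hL₁, hF₁]
    have h1 : ((x^(2^m) + r*x)^3)^(2^m) = (x + r*(x^(2^m)))^3 := by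
      rw [← pow_mul, mul_comm 3 (2^m), pow_mul, hfrob, mul_pow, hr, hq2]
    rw [h1]
    have e1 : x^(3*2^m) = (x^(2^m))^3 := by rw [← pow_mul, mul_comm]
    have e2 : x^(2*2^m+1) = (x^(2^m))^2 * x := by
      rw [pow_add, pow_one, ← pow_mul, mul_comm 2 (2^m)]
    have e3 : x^(2^m+2) = x^(2^m) * x^2 := pow_add x _ 2
    rw [e1, e2, e3]
    linear_combination key_identity_s13 h2 r b (x^(2^m)) x hbs
  -- kernels
  have hker₁ : ∀ w : F, L₁ w = 0 → w = 0 := by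
    intro w hw
    rw [hL₁] at hw
    have hw2 : (w^(2^m) + r*w)^(2^m) = 0 := by rw [hw]; exact zero_pow (by positivity)
    rw [hfrob, mul_pow, hr, hq2] at hw2
    have h3 : (r-1)*(r+1)*w = 0 := by linear_combination r*hw - hw2
    exact (mul_eq_zero.mp h3).resolve_left (mul_ne_zero hr1 hr1')
  have hker₂ : ∀ w : F, L₂ w = 0 → w = 0 := by
    intro w hw
    rw [hL₂] at hw
    have hr3 : (r^3)^(2^m) = r^3 := by rw [← pow_mul, mul_comm, pow_mul, hr]
    have hw2 : (r^3 * w^(2^m) + w)^(2^m) = 0 := by rw [hw]; exact zero_pow (by positivity)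
    rw [hfrob, mul_pow, hr3, hq2] at hw2
    have h3 : (r^6+1)*w = 0 := by linear_combination r^3*hw2 - hw + w*h2
    exact (mul_eq_zero.mp h3).resolve_left hc6
  -- additivity
  have hadd₁ : ∀ u v : F, L₁ (u+v) = L₁ u + L₁ v := by
    intro u v; rw [hL₁, hL₁, hL₁, hfrob]; ring
  have hadd₂ : ∀ u v : F, L₂ (u+v) = L₂ u + L₂ v := by
    intro u v; rw [hL₂, hL₂, hL₂, hfrob]; ring
  have hinj : ∀ (L : F → F), (∀ u v : F, L (u+v) = L u + L v) → (∀ w, L w = 0 → w = 0) →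
      Function.Injective L := by
    intro L hadd hker u v huv
    have h := hadd (u-v) v
    rw [sub_add_cancel] at h
    have h0 : L (u - v) = 0 := by linear_combination huv - h
    have := hker _ h0
    exact sub_eq_zero.mp this
  have hbij₁ : Function.Bijective L₁ :=
    Finite.injective_iff_bijective.mp (hinj L₁ hadd₁ hker₁)
  have hbij₂ : Function.Bijective L₂ :=
    Finite.injective_iff_bijective.mp (hinj L₂ hadd₂ hker₂)
  refine ⟨?_, hmain, hbij₁, hbij₂⟩
  -- affine equivalence
  set e₁ := Equiv.ofBijective L₁ hbij₁ with he₁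
  set e₂ := Equiv.ofBijective L₂ hbij₂ with he₂
  have he₁app : ∀ x, e₁ x = L₁ x := fun x => rfl
  have he₂app : ∀ x, e₂ x = L₂ x := fun x => rfl
  have hsymm₂ : ∀ u v : F, e₂.symm (u + v) = e₂.symm u + e₂.symm v := by
    intro u v
    apply e₂.injective
    rw [Equiv.apply_symm_apply, he₂app, hadd₂]
    rw [show L₂ (e₂.symm u) = e₂ (e₂.symm u) from rfl,
      show L₂ (e₂.symm v) = e₂ (e₂.symm v) from rfl,
      Equiv.apply_symm_apply, Equiv.apply_symm_apply]
  have hsymm₁ : ∀ u v : F, e₁.symm (u + v) = e₁.symm u + e₁.symm v := by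
    intro u v
    apply e₁.injective
    rw [Equiv.apply_symm_apply, he₁app, hadd₁]
    rw [show L₁ (e₁.symm u) = e₁ (e₁.symm u) from rfl,
      show L₁ (e₁.symm v) = e₁ (e₁.symm v) from rfl,
      Equiv.apply_symm_apply, Equiv.apply_symm_apply]
  have hL₂0 : L₂ 0 = 0 := by rw [hL₂, zero_pow (by positivity : (2:ℕ)^m ≠ 0)]; ring
  have hL₁0 : L₁ 0 = 0 := by rw [hL₁, zero_pow (by positivity : (2:ℕ)^m ≠ 0)]; ring
  have hs₂0 : e₂.symm 0 = 0 := by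
    apply e₂.injective; rw [Equiv.apply_symm_apply]; exact (hL₂0).symm
  have hs₁0 : e₁.symm 0 = 0 := by
    apply e₁.injective; rw [Equiv.apply_symm_apply]; exact (hL₁0).symm
  refine ⟨fun z => e₂.symm ((r^6+1) * z), fun z => e₁.symm z, ⟨?_, ?_⟩, ⟨?_, ?_⟩, ?_⟩
  · exact e₂.symm.bijective.comp (Equiv.mulLeft₀ (r^6+1) hc6).bijective
  · intro x y
    simp only [mul_zero, hs₂0, add_zero, mul_add, hsymm₂]
  · exact e₁.symm.bijective
  · intro x y
    simp only [hs₁0, add_zero, hsymm₁]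
  · intro x
    have h := hmain (e₁.symm x)
    have hx3 : L₂ ((L₁ (e₁.symm x))^3) = L₂ (x^3) := by
      rw [show L₁ (e₁.symm x) = e₁ (e₁.symm x) from rfl, Equiv.apply_symm_apply]
    rw [hx3] at h
    simp only []
    rw [← h]
    rw [show L₂ (x^3) = e₂ (x^3) from rfl, Equiv.symm_apply_apply]
end

section
/- Let m ≥ 4 and q = 2^m. For any r ∈ F_q with r ∉ F₂, setting d = (r+1)²/r ∈ F_q, the function F₁ : F_{q²} → F_{q²} given by F₁(x) = x^{3q} + dx^{2q+1} + x^{q+2} is affine equivalent to G₂(x) = x^{2^{m-1}+1}. In fact, with L(x) = x^q + rx, one has L(G₂(L(x)^{2q})) = (r³ + r)·F₁(x) for all x ∈ F_{q²}, and L is a bijection of F_{q²}. -/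
/-- The inverse of an additive bijection is additive. -/
lemma invFun_additive {F : Type*} [Field F] {g : F → F} (hg : Function.Bijective g)
    (hadd : ∀ a b : F, g (a + b) = g a + g b) (a b : F) :
    Function.invFun g (a + b) = Function.invFun g a + Function.invFun g b := by
  apply hg.injective
  rw [hadd, Function.invFun_eq (hg.surjective _), Function.invFun_eq (hg.surjective _),
    Function.invFun_eq (hg.surjective _)]

/-- For `r ∈ 𝔽_q \ 𝔽₂` (expressed as `r^(2^m) = r`, `r ≠ 0`, `r ≠ 1`), with
`d = (r+1)²/r`, the function `F₁(x) = x^{3q} + dx^{2q+1} + x^{q+2}` is affine equivalent to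
`G₂(x) = x^{2^{m-1}+1}`; moreover with `L(x) = x^q + rx` one has
`L(G₂(L(x)^{2q})) = (r³+r)·F₁(x)` and `L` is a bijection. Here `q = 2^m`, `m ≥ 4`. -/
theorem F1_equiv_G2
    (m : ℕ) (hm : 4 ≤ m) (F : Type*) [Field F] [Fintype F]
    (hcard : Fintype.card F = 2 ^ (2 * m))
    (r : F) (hr : r ^ (2 ^ m) = r) (hr0 : r ≠ 0) (hr1 : r ≠ 1)
    (d : F) (hd : d = (r + 1) ^ 2 / r)
    (F₁ L : F → F)
    (hF₁ : ∀ x : F, F₁ x = x ^ (3 * 2 ^ m) + d * x ^ (2 * 2 ^ m + 1) + x ^ (2 ^ m + 2))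
    (hL : ∀ x : F, L x = x ^ (2 ^ m) + r * x) :
    AffEquiv F₁ (fun x : F => x ^ (2 ^ (m - 1) + 1)) ∧
    (∀ x : F, L (((L x) ^ (2 * 2 ^ m)) ^ (2 ^ (m - 1) + 1)) = (r ^ 3 + r) * F₁ x) ∧
    Function.Bijective L := by
  -- characteristic 2
  have hp2 : CharP F 2 := by
    obtain ⟨n, hprime, hcardp⟩ := FiniteField.card F (ringChar F)
    have hdvd : ringChar F ∣ 2 ^ (2 * m) := by
      rw [← hcard, hcardp]
      exact dvd_pow_self _ (by positivity)
    have h2 : ringChar F = 2 :=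
      (Nat.prime_dvd_prime_iff_eq hprime Nat.prime_two).mp
        (hprime.dvd_of_dvd_pow hdvd)
    rw [← h2]; exact ringChar.charP F
  haveI := hp2
  haveI : Fact (Nat.Prime 2) := ⟨Nat.prime_two⟩
  set q := 2 ^ m with hq
  have hmm : q * q = 2 ^ (2 * m) := by rw [hq, ← pow_add]; ring_nf
  have hxqq : ∀ a : F, a ^ (q * q) = a := by
    intro a; rw [hmm, ← hcard, FiniteField.pow_card]
  have hfrob : ∀ a b : F, (a + b) ^ q = a ^ q + b ^ q := fun a b => add_pow_char_pow a b 2 m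
  have h2z : (2 : F) = 0 := by exact_mod_cast CharP.cast_eq_zero F 2
  have hadd0 : ∀ a b : F, a + b = 0 → a = b := by
    intro a b h
    have := CharTwo.add_eq_iff_eq_add.mp h
    simpa using this
  have hself : ∀ a : F, a + a = 0 := CharTwo.add_self_eq_zero
  have hqpos : 0 < q := by positivity
  have hd' : (r ^ 3 + r) * d = 1 + r ^ 4 := by
    rw [hd]; field_simp; linear_combination (r ^ 3 + r ^ 2 + r) * h2z
  have hr1' : r + 1 ≠ 0 := by
    intro h
    exact hr1 (by have := hadd0 r 1 h; simpa using this)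
  have hcne : (r ^ 3 + r) ≠ 0 := by
    intro h
    have hz : r * (r + 1) ^ 2 = 0 := by linear_combination h + r ^ 2 * h2z
    rcases mul_eq_zero.mp hz with h' | h'
    · exact hr0 h'
    · exact hr1' (pow_eq_zero_iff (by norm_num) |>.mp h')
  -- the main identity
  have hId : ∀ x : F, L (((L x) ^ (2 * q)) ^ (2 ^ (m - 1) + 1)) = (r ^ 3 + r) * F₁ x := by
    intro x
    set y := x ^ q with hy
    have hyq : y ^ q = x := by rw [hy, ← pow_mul]; exact hxqq x
    have hLx : L x = y + r * x := by rw [hL]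
    have hA : (x + r * y) ^ q = y + r * x := by rw [hfrob, mul_pow, hr, hyq, ← hy]
    have hB : (y + r * x) ^ q = x + r * y := by rw [hfrob, mul_pow, hr, hyq, ← hy]
    have h2q : ∀ a : F, a ^ (2 * q) = (a ^ q) ^ 2 := by intro a; rw [mul_comm, pow_mul]
    have hswap : ∀ a : F, (a ^ 2) ^ q = (a ^ q) ^ 2 := by
      intro a; rw [← pow_mul, mul_comm, pow_mul]
    have hexp : 2 * q * (2 ^ (m - 1) + 1) = q * q + 2 * q := by
      have h1 : 2 * 2 ^ (m - 1) = q := by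
        rw [hq, ← pow_succ']; congr 1; omega
      calc 2 * q * (2 ^ (m - 1) + 1) = q * (2 * 2 ^ (m - 1)) + 2 * q := by ring
        _ = q * q + 2 * q := by rw [h1]
    have hLxq : (L x) ^ q = x + r * y := by rw [hLx, hB]
    have hinner : ((L x) ^ (2 * q)) ^ (2 ^ (m - 1) + 1) = (y + r * x) * (x + r * y) ^ 2 := by
      rw [← pow_mul, hexp, pow_add, hxqq, h2q, hLxq, hLx]
    rw [hinner, hL, mul_pow, hswap, hA, hB, hF₁]
    have hx3 : x ^ (3 * q) = y ^ 3 := by rw [mul_comm, pow_mul, ← hy]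
    have hx2 : x ^ (2 * q + 1) = y ^ 2 * x := by rw [pow_succ, h2q, ← hy]
    have hx1 : x ^ (q + 2) = y * x ^ 2 := by rw [pow_add, ← hy]
    rw [hx3, hx2, hx1]
    linear_combination (-(x * y ^ 2)) * hd' +
      (2 * r ^ 2 * x * y ^ 2 + (r + r ^ 3) * x ^ 2 * y + r ^ 2 * x ^ 3) * h2z
  -- L is additive and bijective
  have hLadd : ∀ a b : F, L (a + b) = L a + L b := by
    intro a b; rw [hL, hL, hL, hfrob]; ring
  have hL0 : L 0 = 0 := by
    rw [hL, zero_pow hqpos.ne', mul_zero, add_zero]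
  have hLinj : Function.Injective L := by
    intro a b hab
    have hz : L (a + b) = 0 := by rw [hLadd, hab, hself]
    by_contra hne
    set c := a + b with hc
    have hc0 : c ≠ 0 := by
      intro h; exact hne (hadd0 a b h)
    have h1 : c ^ q = r * c := by
      have := hadd0 _ _ (by rw [← hL c]; exact hz)
      exact this
    have h2 : c = r ^ 2 * c := by
      calc c = c ^ (q * q) := (hxqq c).symm
        _ = (c ^ q) ^ q := by rw [pow_mul]
        _ = (r * c) ^ q := by rw [h1]
        _ = r * (r * c) := by rw [mul_pow, hr, h1]
        _ = r ^ 2 * c := by ring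
    have hr2 : r ^ 2 = 1 := by
      have h3 : (r ^ 2 - 1) * c = 0 := by linear_combination -h2
      rcases mul_eq_zero.mp h3 with h' | h'
      · linear_combination h'
      · exact absurd h' hc0
    have : (r + 1) ^ 2 = 0 := by linear_combination hr2 + r * h2z + h2z
    exact hr1' (pow_eq_zero_iff (by norm_num) |>.mp this)
  have hLbij : Function.Bijective L := Finite.injective_iff_bijective.mp hLinj
  refine ⟨?_, hId, hLbij⟩
  -- affine equivalence
  set M : F → F := fun x => (L x) ^ (2 * q) with hM
  have hfr2 : ∀ a b : F, (a + b) ^ (2 * q) = a ^ (2 * q) + b ^ (2 * q) := by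
    intro a b
    have h : 2 * q = 2 ^ (m + 1) := by rw [hq, pow_succ]; ring
    rw [h]; exact add_pow_char_pow a b 2 (m + 1)
  have hMadd : ∀ a b : F, M (a + b) = M a + M b := by
    intro a b; simp only [hM]; rw [hLadd, hfr2]
  have hMinj : Function.Injective M := by
    intro a b hab
    apply hLinj
    apply hadd0
    have : (L a + L b) ^ (2 * q) = 0 := by
      rw [hfr2]
      simp only [hM] at hab
      rw [hab, hself]
    exact pow_eq_zero_iff (by positivity) |>.mp this
  have hMbij : Function.Bijective M := Finite.injective_iff_bijective.mp hMinj
  have hM0 : M 0 = 0 := by simp only [hM]; rw [hL0, zero_pow (by positivity)]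
  -- the two affine permutations
  refine ⟨fun z => Function.invFun L ((r ^ 3 + r) * z), Function.invFun M, ⟨?_, ?_⟩, ⟨?_, ?_⟩, ?_⟩
  · -- L₁ bijective
    constructor
    · intro a b hab
      have := hLbij.injective.comp (Function.rightInverse_invFun hLbij.surjective).injective
      have h' : (r ^ 3 + r) * a = (r ^ 3 + r) * b := by
        have := congrArg L hab
        rwa [Function.invFun_eq (hLbij.surjective _), Function.invFun_eq (hLbij.surjective _)]
          at this
      exact mul_left_cancel₀ hcne h'
    · intro z
      refine ⟨((r ^ 3 + r)⁻¹) * L z, ?_⟩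
      show Function.invFun L ((r ^ 3 + r) * ((r ^ 3 + r)⁻¹ * L z)) = z
      rw [← mul_assoc, mul_inv_cancel₀ hcne, one_mul,
        Function.leftInverse_invFun hLbij.injective]
  · -- L₁ affine
    intro a b
    have hinv0 : Function.invFun L 0 = 0 := by
      conv_lhs => rw [← hL0]
      exact Function.leftInverse_invFun hLbij.injective 0
    simp only [mul_zero, hinv0, add_zero, mul_add]
    exact invFun_additive hLbij hLadd _ _
  · -- L₂ bijective
    constructor
    · exact (Function.rightInverse_invFun hMbij.surjective).injective
    · intro z; exact ⟨M z, Function.leftInverse_invFun hMbij.injective z⟩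
  · -- L₂ affine
    intro a b
    have hinv0 : Function.invFun M 0 = 0 := by
      conv_lhs => rw [← hM0]
      exact Function.leftInverse_invFun hMbij.injective 0
    rw [hinv0, add_zero]
    exact invFun_additive hMbij hMadd a b
  · -- the equivalence identity
    intro x
    set u := Function.invFun M x with hu
    have hMu : M u = x := Function.invFun_eq (hMbij.surjective x)
    have := hId u
    simp only [hM] at hMu
    rw [hMu] at this
    simp only
    rw [← this, Function.leftInverse_invFun hLbij.injective]
end

section
/- Let m ≥ 4 be even, q = 2^m, and let ω ∈ F_q be a primitive cube root of unity. Then the map L(x) = x^q + ωx is a bijection of F_{q²}, and the function f₂(x) = x^{3q} + x^{q+2} + x³ satisfies L(G₁(L(x))) = (1+ω)·f₂(x) for all x ∈ F_{q²}, where G₁(x) = x³; in particular f₂ is affine equivalent to G₁. -/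
/-- Let `m ≥ 4` be even, `q = 2^m`, and `ω ∈ 𝔽_q` a primitive cube root of unity
(`ω² + ω + 1 = 0`, `ω^(2^m) = ω`). Then `L(x) = x^q + ωx` is a bijection of `𝔽_{q²}`,
`f₂(x) = x^{3q} + x^{q+2} + x³` satisfies `L(G₁(L(x))) = (1+ω)·f₂(x)` where `G₁(x) = x³`,
and in particular `f₂` is affine equivalent to `G₁`. -/
theorem f2_equiv_G1
    (m : ℕ) (hm : 4 ≤ m) (hmeven : Even m) (F : Type*) [Field F] [Fintype F]
    (hcard : Fintype.card F = 2 ^ (2 * m))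
    (ω : F) (hω : ω ^ (2 ^ m) = ω) (hω3 : ω ^ 2 + ω + 1 = 0)
    (L f₂ : F → F)
    (hL : ∀ x : F, L x = x ^ (2 ^ m) + ω * x)
    (hf₂ : ∀ x : F, f₂ x = x ^ (3 * 2 ^ m) + x ^ (2 ^ m + 2) + x ^ 3) :
    Function.Bijective L ∧
    (∀ x : F, L ((L x) ^ 3) = (1 + ω) * f₂ x) ∧
    AffEquiv f₂ (fun x : F => x ^ 3) := by

  -- characteristic 2
  haveI : CharP F (ringChar F) := ringChar.charP F
  have hprime : (ringChar F).Prime := CharP.char_is_prime F (ringChar F)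
  have hdvd : ringChar F ∣ 2 ^ (2 * m) := by
    rw [← hcard]
    exact (CharP.cast_eq_zero_iff F (ringChar F) _).mp (FiniteField.cast_card_eq_zero F)
  have hr2 : ringChar F = 2 :=
    (Nat.prime_dvd_prime_iff_eq hprime Nat.prime_two).mp (hprime.dvd_of_dvd_pow hdvd)
  haveI : CharP F 2 := hr2 ▸ ringChar.charP F
  haveI : Fact (Nat.Prime 2) := ⟨Nat.prime_two⟩
  have h2 : (2 : F) = 0 := by exact_mod_cast CharP.cast_eq_zero F 2
  have hfrob : ∀ a b : F, (a + b) ^ 2 ^ m = a ^ 2 ^ m + b ^ 2 ^ m := fun a b =>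
    add_pow_char_pow a b 2 m
  have hqq : ∀ a : F, (a ^ 2 ^ m) ^ 2 ^ m = a := by
    intro a
    rw [← pow_mul, ← pow_add, ← two_mul, ← hcard, FiniteField.pow_card]
  have hc : (1 : F) + ω ≠ 0 := by
    intro h
    have hω1 : ω = 1 := by linear_combination h - h2
    rw [hω1] at hω3
    have : (1 : F) = 0 := by linear_combination hω3 - h2
    exact one_ne_zero this
  have hL0 : L 0 = 0 := by rw [hL]; norm_num
  have hLadd : ∀ x y : F, L (x + y) = L x + L y := by
    intro x y; rw [hL, hL, hL, hfrob]; ring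
  have hωne : ω ≠ 0 := by
    intro h; rw [h] at hω3; norm_num at hω3
  have hLinj : Function.Injective L := by
    intro x y hxy
    have h0 : L (x + y) = 0 := by
      rw [hLadd, hxy]; linear_combination (L y) * h2
    rw [hL] at h0
    set z := x + y with hzdef
    have hz : z ^ 2 ^ m = ω * z := by linear_combination h0 - ω * z * h2
    have hz2 : z = ω ^ 2 * z := by
      conv_lhs => rw [← hqq z]
      rw [hz, mul_pow, hω, hz]; ring
    have hzz : ω * z = 0 := by
      linear_combination -hz2 + z * hω3 - ω ^ 2 * z * h2
    have hz0 : z = 0 := by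
      rcases mul_eq_zero.mp hzz with h | h
      · exact absurd h hωne
      · exact h
    rw [hzdef] at hz0
    linear_combination hz0 - y * h2
  have hLbij : Function.Bijective L := Finite.injective_iff_bijective.mp hLinj
  have key : ∀ x : F, L ((L x) ^ 3) = (1 + ω) * f₂ x := by
    intro x
    have h1 : (L x) ^ 2 ^ m = x + ω * (x ^ 2 ^ m) := by
      rw [hL, hfrob, mul_pow, hω, hqq]
    have e1 : x ^ (3 * 2 ^ m) = (x ^ 2 ^ m) ^ 3 := by rw [mul_comm, pow_mul]
    have e2 : x ^ (2 ^ m + 2) = (x ^ 2 ^ m) * x ^ 2 := by rw [pow_add]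
    rw [hL ((L x) ^ 3), ← pow_mul, Nat.mul_comm, pow_mul, h1, hL x, hf₂, e1, e2]
    set a := x ^ 2 ^ m
    linear_combination ((ω - 1) * (x ^ 3 * ω + 3 * x ^ 2 * a + a ^ 3)) * hω3 +
      (x ^ 2 * a * (ω + 1) + 3 * ω ^ 2 * x * a ^ 2) * h2
  set E : F ≃ F := Equiv.ofBijective L hLbij with hEdef
  have hE : ∀ y : F, L (E.symm y) = y := fun y => E.apply_symm_apply y
  have hEinv0 : E.symm 0 = 0 := by apply hLinj; rw [hE, hL0]
  have hEadd : ∀ x y : F, E.symm (x + y) = E.symm x + E.symm y := by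
    intro x y; apply hLinj; rw [hLadd, hE, hE, hE]
  refine ⟨hLbij, key, fun y => E.symm ((1 + ω) * y), E.symm, ⟨?_, ?_⟩,
    ⟨E.symm.bijective, ?_⟩, ?_⟩
  · exact E.symm.bijective.comp (Equiv.mulLeft₀ _ hc).bijective
  · intro x y
    simp only [mul_add, hEadd, mul_zero, hEinv0, add_zero]
  · intro x y; rw [hEadd, hEinv0, add_zero]
  · intro x
    show x ^ 3 = E.symm ((1 + ω) * f₂ (E.symm x))
    apply hLinj
    rw [hE]
    have h := key (E.symm x)
    rwa [hE] at h
end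

section
/- Let m be even, q = 2^m, let ω ∈ F_q be a primitive cube root of unity, and let u ∈ U. Then the map L₂ : F_{q²} → F_{q²} defined by L₂(x) = x^{2q} + ωu²x² is a bijection of F_{q²}. -/
/-- Let `m` be even and positive, `q = 2^m`, `ω ∈ 𝔽_q` a primitive cube root of unity
(`ω² + ω + 1 = 0`, `ω^(2^m) = ω`), and `u` an element of the unit circle
`U = {z : z^(q+1) = 1}` of `𝔽_{q²}`. Then `L₂(x) = x^{2q} + ωu²x²` is a bijection. -/
theorem L2_bijective
    (m : ℕ) (hm : 0 < m) (hmeven : Even m) (F : Type*) [Field F] [Fintype F]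
    (hcard : Fintype.card F = 2 ^ (2 * m))
    (ω : F) (hω : ω ^ (2 ^ m) = ω) (hω3 : ω ^ 2 + ω + 1 = 0)
    (u : F) (hu : u ^ (2 ^ m + 1) = 1) :
    Function.Bijective (fun x : F => x ^ (2 * 2 ^ m) + ω * u ^ 2 * x ^ 2) := by
  -- F has characteristic 2
  have hp : Fact (Nat.Prime (ringChar F)) := ⟨CharP.char_is_prime F _⟩
  have hchar2 : ringChar F = 2 := by
    obtain ⟨n, hn⟩ := FiniteField.card F (ringChar F)
    have hdvd : ringChar F ∣ 2 ^ (2 * m) := by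
      rw [← hcard, hn.2]
      exact dvd_pow_self _ (by positivity)
    have := (Nat.Prime.dvd_of_dvd_pow hp.out hdvd)
    exact (Nat.prime_dvd_prime_iff_eq hp.out Nat.prime_two).mp this
  haveI : CharP F 2 := hchar2 ▸ ringChar.charP F
  set N := 2 ^ m with hN
  have hN2 : 2 ≤ N := by
    calc 2 = 2 ^ 1 := (pow_one 2).symm
    _ ≤ 2 ^ m := Nat.pow_le_pow_right (by norm_num) hm
  have hexp : 2 * N = 2 ^ (m + 1) := by rw [hN, pow_succ, mul_comm]
  -- suffices injectivity
  rw [Fintype.bijective_iff_injective_and_card]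
  refine ⟨?_, rfl⟩
  intro x y hxy
  by_contra hne
  obtain ⟨z, hz⟩ : ∃ z : F, z = x - y := ⟨_, rfl⟩
  have hz0 : z ≠ 0 := hz ▸ sub_ne_zero.mpr hne
  have hfz : z ^ (2 * N) + ω * u ^ 2 * z ^ 2 = 0 := by
    have h1 : z ^ (2 * N) = x ^ (2 * N) - y ^ (2 * N) := by
      rw [hz, hexp]; exact sub_pow_char_pow (p := 2) x y (m + 1)
    have h2 : z ^ 2 = x ^ 2 - y ^ 2 := by
      rw [hz]; exact sub_pow_char (p := 2) x y
    have hxy' : x ^ (2 * N) + ω * u ^ 2 * x ^ 2 = y ^ (2 * N) + ω * u ^ 2 * y ^ 2 := hxy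
    rw [h1, h2]
    linear_combination hxy'
  have hzz : z ^ (2 * N) = ω * u ^ 2 * z ^ 2 := by
    have := eq_neg_of_add_eq_zero_left hfz
    simpa [CharTwo.neg_eq] using this
  -- raise both sides to the (N+1)-th power
  have hzq : z ^ (N * N - 1) = 1 := by
    have : N * N = Fintype.card F := by rw [hcard, hN, ← pow_add, two_mul]
    rw [this]; exact FiniteField.pow_card_sub_one_eq_one z hz0
  have key : z ^ (2 * N * (N + 1)) = ω ^ (N + 1) * z ^ (2 * (N + 1)) := by
    calc z ^ (2 * N * (N + 1)) = (z ^ (2 * N)) ^ (N + 1) := by rw [← pow_mul]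
    _ = (ω * u ^ 2 * z ^ 2) ^ (N + 1) := by rw [hzz]
    _ = ω ^ (N + 1) * (u ^ (N + 1)) ^ 2 * (z ^ 2) ^ (N + 1) := by
      rw [mul_pow, mul_pow, pow_right_comm u 2 (N + 1)]
    _ = ω ^ (N + 1) * z ^ (2 * (N + 1)) := by rw [hu, one_pow, mul_one, ← pow_mul]
  have harith : 2 * N * (N + 1) = 2 * (N * N - 1) + 2 * (N + 1) := by
    have : 1 ≤ N * N := Nat.one_le_iff_ne_zero.mpr (by positivity)
    zify [this]; ring
  have hlhs : z ^ (2 * N * (N + 1)) = z ^ (2 * (N + 1)) := by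
    rw [harith, pow_add, mul_comm 2 (N * N - 1), pow_mul, hzq, one_pow, one_mul]
  have hzne : z ^ (2 * (N + 1)) ≠ 0 := pow_ne_zero _ hz0
  have hω1 : ω ^ (N + 1) = 1 := by
    have h : (1 : F) * z ^ (2 * (N + 1)) = ω ^ (N + 1) * z ^ (2 * (N + 1)) := by
      rw [one_mul]; exact hlhs.symm.trans key
    exact (mul_right_cancel₀ hzne h).symm
  have hωsq : ω ^ 2 = 1 := by
    rw [pow_succ, hN, hω] at hω1
    rw [sq, hω1]
  -- contradiction: ω² = 1 and ω² + ω + 1 = 0 give ω = 0, then 1 = 0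
  have hω0 : ω = 0 := by
    rw [hωsq] at hω3
    have h2z : (2 : F) = 0 := by simpa using CharP.cast_eq_zero F 2
    linear_combination hω3 - h2z
  rw [hω0] at hω3
  simp at hω3
end

section
/- Let q = 2^m and suppose a₁, a₂, a₃ ∈ F_q. Then θ₁ = (1 + a₁ + a₂ + a₃)², and the following two polynomial identities hold: θ₁²θ₄ + θ₁θ₂θ̄₂ + θ₂²θ₃ + θ̄₂²θ̄₃ = θ₁·S² and θ₁²θ₃ + θ₁θ̄₂² + θ₂²θ₃ + θ̄₂²θ̄₃ = θ₁·S·T, where S = a₁² + a₁a₃ + a₂² + a₂ and T = a₁a₃ + a₂ + a₃² + 1. -/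
/-- If `a₁, a₂, a₃` lie in the subfield `𝔽_q` of `𝔽_{q²}` (`q = 2^m`; membership is
expressed as `a^(2^m) = a`), then `θ₁ = (1 + a₁ + a₂ + a₃)²` and the two Γ-polynomials
factor as `θ₁·S²` and `θ₁·S·T`, where `S = a₁² + a₁a₃ + a₂² + a₂` and
`T = a₁a₃ + a₂ + a₃² + 1`. Conjugation is `z̄ = z^q`. -/
theorem gamma_factorization_subfield
    (m : ℕ) (hm : 1 ≤ m) (F : Type*) [Field F] [Fintype F]
    (hcard : Fintype.card F = 2 ^ (2 * m))
    (a₁ a₂ a₃ : F)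
    (ha₁ : a₁ ^ (2 ^ m) = a₁) (ha₂ : a₂ ^ (2 ^ m) = a₂) (ha₃ : a₃ ^ (2 ^ m) = a₃)
    (θ₁ θ₂ θ₃ θ₄ S T : F)
    (hθ₁ : θ₁ = 1 + a₁ ^ 2 + a₂ * a₂ ^ (2 ^ m) + a₃ * a₃ ^ (2 ^ m))
    (hθ₂ : θ₂ = a₁ + a₂ ^ (2 ^ m) * a₃)
    (hθ₃ : θ₃ = a₂ ^ (2 ^ m) + a₁ * a₃ ^ (2 ^ m))
    (hθ₄ : θ₄ = a₁ ^ 2 + a₂ * a₂ ^ (2 ^ m))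
    (hS : S = a₁ ^ 2 + a₁ * a₃ + a₂ ^ 2 + a₂)
    (hT : T = a₁ * a₃ + a₂ + a₃ ^ 2 + 1) :
    θ₁ = (1 + a₁ + a₂ + a₃) ^ 2 ∧
    θ₁ ^ 2 * θ₄ + θ₁ * θ₂ * θ₂ ^ (2 ^ m) + θ₂ ^ 2 * θ₃
        + (θ₂ ^ (2 ^ m)) ^ 2 * θ₃ ^ (2 ^ m) = θ₁ * S ^ 2 ∧
    θ₁ ^ 2 * θ₃ + θ₁ * (θ₂ ^ (2 ^ m)) ^ 2 + θ₂ ^ 2 * θ₃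
        + (θ₂ ^ (2 ^ m)) ^ 2 * θ₃ ^ (2 ^ m) = θ₁ * S * T := by
  haveI hchar : CharP F 2 := by
    obtain ⟨n, hp, hc⟩ := FiniteField.card F (ringChar F)
    have hd : ringChar F ∣ 2 ^ (2 * m) := by
      rw [← hcard, hc]; exact dvd_pow_self _ n.2.ne'
    have h2 : ringChar F = 2 :=
      (Nat.prime_dvd_prime_iff_eq hp Nat.prime_two).mp (hp.dvd_of_dvd_pow hd)
    rw [← h2]; exact ringChar.charP F
  haveI : ExpChar F 2 := ExpChar.prime Nat.prime_two
  have h2 : (2 : F) = 0 := by simpa using CharP.cast_eq_zero F 2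
  have hadd : ∀ x y : F, (x + y) ^ 2 ^ m = x ^ 2 ^ m + y ^ 2 ^ m := fun x y =>
    add_pow_expChar_pow x y 2 m
  rw [ha₂] at hθ₂ hθ₃ hθ₁ hθ₄
  rw [ha₃] at hθ₁ hθ₃
  have hb2 : θ₂ ^ 2 ^ m = θ₂ := by
    rw [hθ₂, hadd, mul_pow, ha₁, ha₂, ha₃]
  have hb3 : θ₃ ^ 2 ^ m = θ₃ := by
    rw [hθ₃, hadd, mul_pow, ha₁, ha₂, ha₃]
  rw [hb2, hb3]
  subst hθ₁ hθ₂ hθ₃ hθ₄ hS hT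
  refine ⟨?_, ?_, ?_⟩
  · linear_combination (-(a₃ + a₂ + a₂ * a₃ + a₁ + a₁ * a₃ + a₁ * a₂)) * h2
  · linear_combination (a₂^2*a₃^2 + a₂^2*a₃^4 - a₂^3 + a₂^4*a₃^2 - a₂^5 + a₁*a₂^2*a₃
      - a₁*a₂^4*a₃ + a₁^2 + a₁^2*a₃^2 + a₁^2*a₂*a₃^2 + a₁^2*a₂^2 + a₁^2*a₂^2*a₃^2
      - 2*a₁^2*a₂^3 - a₁^3*a₃^3 - 2*a₁^3*a₂^2*a₃ + a₁^4 - a₁^4*a₂ - a₁^5*a₃) * h2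
  · linear_combination (-a₂^2 - a₂^2*a₃^2 + a₂^3*a₃^2 - a₂^4 + 2*a₁*a₂^2*a₃
      + a₁*a₂^2*a₃^3 - a₁^2*a₃^2 - a₁^2*a₃^4 + a₁^2*a₂ + 2*a₁^2*a₂*a₃^2 - a₁^2*a₂^2
      - a₁^2*a₂^2*a₃^2 + a₁^3*a₃ - a₁^4*a₃^2) * h2
end
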